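/- arXiv:1411.2577 — 6 statements merged into one kernel-verified Lean document; each statement's English description precedes it below -/
import Mathlib

section
/- Let X be a normed space and suppose the function φ : X → ℝ satisfies: φ(0) = 1, φ(x) ≥ e^{-K‖x‖} for all x ∈ X (K > 0 a constant), and φ(x) = ∫ e^{i⟨x,v⟩} dμ(v) for a probability measure μ on the dual (i.e., φ is the characteristic function of μ). Fix x ∈ X with x ≠ 0 and let ν be the pushforward of μ under v ↦ ⟨x, v⟩. Then for every t > 0, ν({w ∈ ℝ : |w| ≥ t·‖x‖}) ≤ C/t for an absolute constant C (depending only on K). -/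
open MeasureTheory

theorem stmt_5 (K : ℝ) (hK : 0 < K) :
    ∃ C : ℝ, 0 < C ∧
      ∀ (d : ℕ) (μ : Measure (EuclideanSpace ℝ (Fin d))),
        IsProbabilityMeasure μ →
        μ.map (fun v => -v) = μ →
        ∀ nrm : EuclideanSpace ℝ (Fin d) → ℝ,
          (∀ (t : ℝ) (y : EuclideanSpace ℝ (Fin d)), nrm (t • y) = |t| * nrm y) →
        ∀ φ : EuclideanSpace ℝ (Fin d) → ℝ,
          (∀ y, φ y = ∫ v, Real.cos (inner ℝ y v : ℝ) ∂μ) →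
          (∀ y, Real.exp (-(K * nrm y)) ≤ φ y) →
        ∀ x : EuclideanSpace ℝ (Fin d), x ≠ 0 → 0 < nrm x →
        ∀ t : ℝ, 0 < t →
          (μ {v | t * nrm x ≤ |(inner ℝ x v : ℝ)|}).toReal ≤ C / t := by
  refine ⟨2 * K, by positivity, ?_⟩
  intro d μ hprob hsym nrm hnrm φ hφ hφexp x hx0 hnx t ht
  classical
  set w : EuclideanSpace ℝ (Fin d) → ℝ := fun v => (inner ℝ x v : ℝ) with hw
  have hw_cont : Continuous w := by
    simpa [hw] using (innerSL ℝ x).continuous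
  set δ : ℝ := 2 / (t * nrm x) with hδdef
  have hδ : 0 < δ := by positivity
  have hδinv : 2 / δ = t * nrm x := by
    rw [hδdef]; field_simp
  set S : Set (EuclideanSpace ℝ (Fin d)) := {v | t * nrm x ≤ |w v|} with hS
  have hS_meas : MeasurableSet S :=
    measurableSet_le measurable_const (hw_cont.measurable.abs)
  set ρ : Measure ℝ := volume.restrict (Set.Ioc (0:ℝ) δ) with hρ
  haveI : IsFiniteMeasure ρ := by
    constructor
    rw [hρ, Measure.restrict_apply MeasurableSet.univ]
    simp [Real.volume_Ioc]
  -- the kernel function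
  set f : EuclideanSpace ℝ (Fin d) → ℝ → ℝ := fun v s => 1 - Real.cos (s * w v) with hf
  have hf_cont : Continuous (Function.uncurry f) := by
    apply continuous_const.sub
    exact Real.continuous_cos.comp (continuous_snd.mul (hw_cont.comp continuous_fst))
  have hf_bdd : ∀ p : EuclideanSpace ℝ (Fin d) × ℝ, ‖Function.uncurry f p‖ ≤ 2 := by
    intro p
    have huc : Function.uncurry f p = 1 - Real.cos (p.2 * w p.1) := rfl
    rw [huc, Real.norm_eq_abs, abs_le]
    constructor <;> nlinarith [Real.cos_le_one (p.2 * w p.1), Real.neg_one_le_cos (p.2 * w p.1)]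
  have hF_int : Integrable (Function.uncurry f) (μ.prod ρ) := by
    refine (integrable_const (2:ℝ)).mono' hf_cont.aestronglyMeasurable ?_
    exact Filter.Eventually.of_forall hf_bdd
  set g : EuclideanSpace ℝ (Fin d) → ℝ := fun v => ∫ s, f v s ∂ρ with hg
  have hg_int : Integrable g μ := hF_int.integral_prod_left
  have hg_nonneg : ∀ v, 0 ≤ g v := by
    intro v
    apply integral_nonneg
    intro s
    have := Real.cos_le_one (s * w v)
    simp only [hf, Pi.zero_apply]
    linarith
  -- lower bound for g on S
  have hg_low : ∀ v ∈ S, δ / 2 ≤ g v := by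
    intro v hv
    have hW : 2 / δ ≤ |w v| := by
      rw [hδinv]; exact hv
    have hWpos : 0 < |w v| := lt_of_lt_of_le (by positivity) hW
    have hWne : w v ≠ 0 := fun h => by simp [h] at hWpos
    have hcc : Continuous fun s : ℝ => Real.cos (s * w v) :=
      Real.continuous_cos.comp (continuous_id.mul continuous_const)
    have hval : g v = δ - Real.sin (δ * w v) / w v := by
      have h1 : g v = ∫ s in (0:ℝ)..δ, (1 - Real.cos (s * w v)) := by
        rw [hg, hρ, intervalIntegral.integral_of_le hδ.le]
      rw [h1, intervalIntegral.integral_sub intervalIntegrable_const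
        (hcc.intervalIntegrable _ _), intervalIntegral.integral_const,
        intervalIntegral.integral_comp_mul_right Real.cos hWne, integral_cos]
      simp only [smul_eq_mul, zero_mul, Real.sin_zero, sub_zero, mul_one]
      field_simp
    rw [hval]
    have hsin : |Real.sin (δ * w v) / w v| ≤ δ / 2 := by
      rw [abs_div]
      have h1 : |Real.sin (δ * w v)| ≤ 1 := Real.abs_sin_le_one _
      have h2 : 1 / |w v| ≤ δ / 2 := by
        rw [div_le_div_iff₀ hWpos (by norm_num : (0:ℝ) < 2)]
        have he : (2:ℝ) = δ * (2 / δ) := by field_simp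
        nlinarith [hW, hδ]
      calc |Real.sin (δ * w v)| / |w v| ≤ 1 / |w v| := by gcongr
        _ ≤ δ / 2 := h2
    have := abs_le.mp hsin
    linarith [this.2]
  -- upper bound for the inner integrals over μ
  have hcos_int : ∀ s : ℝ, Integrable (fun v => Real.cos (s * w v)) μ := by
    intro s
    refine (integrable_const (1:ℝ)).mono'
      ((Real.continuous_cos.comp (continuous_const.mul hw_cont)).aestronglyMeasurable) ?_
    exact Filter.Eventually.of_forall fun v => by
      simpa [Real.norm_eq_abs] using Real.abs_cos_le_one (s * w v)
  have h4 : ∀ s ∈ Set.Ioc (0:ℝ) δ, (∫ v, f v s ∂μ) ≤ K * nrm x * s := by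
    intro s hs
    have hphi : φ (s • x) = ∫ v, Real.cos (s * w v) ∂μ := by
      rw [hφ (s • x)]
      congr 1
      funext v
      rw [real_inner_smul_left]
    have hint : (∫ v, f v s ∂μ) = 1 - φ (s • x) := by
      rw [hphi]
      rw [integral_sub (integrable_const 1) (hcos_int s)]
      simp
    rw [hint]
    have hb := hφexp (s • x)
    have hnorm : nrm (s • x) = |s| * nrm x := hnrm s x
    have habs : |s| = s := abs_of_pos hs.1
    have hexp : 1 - Real.exp (-(K * (s * nrm x))) ≤ K * (s * nrm x) := by
      have := Real.add_one_le_exp (-(K * (s * nrm x)))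
      linarith
    have hle : Real.exp (-(K * (s * nrm x))) ≤ φ (s • x) := by
      have : Real.exp (-(K * (s * nrm x))) = Real.exp (-(K * nrm (s • x))) := by
        rw [hnorm, habs]
      rw [this]; exact hb
    have hre : K * (s * nrm x) = K * nrm x * s := by ring
    linarith
  -- assemble
  have step1 : δ / 2 * (μ S).toReal ≤ ∫ v in S, g v ∂μ :=
    setIntegral_ge_of_const_le_real hS_meas (measure_ne_top μ S) hg_low hg_int.integrableOn
  have step2 : (∫ v in S, g v ∂μ) ≤ ∫ v, g v ∂μ :=
    setIntegral_le_integral hg_int (Filter.Eventually.of_forall hg_nonneg)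
  have step3 : (∫ v, g v ∂μ) = ∫ s, (∫ v, f v s ∂μ) ∂ρ :=
    integral_integral_swap hF_int
  have hint1 : Integrable (fun s => ∫ v, f v s ∂μ) ρ := by
    have := hF_int.swap.integral_prod_left
    simpa [Function.uncurry] using this
  have hint2 : Integrable (fun s => K * nrm x * s) ρ := by
    rw [hρ]
    exact (continuous_const.mul continuous_id).integrableOn_Ioc
  have step4 : (∫ s, (∫ v, f v s ∂μ) ∂ρ) ≤ ∫ s, K * nrm x * s ∂ρ := by
    refine integral_mono_ae hint1 hint2 ?_
    rw [hρ]
    exact (ae_restrict_iff' measurableSet_Ioc).mpr (Filter.Eventually.of_forall h4)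
  have step5 : (∫ s, K * nrm x * s ∂ρ) = K * nrm x * (δ ^ 2 / 2) := by
    rw [hρ, ← intervalIntegral.integral_of_le hδ.le, intervalIntegral.integral_const_mul,
      integral_id]
    ring
  have key : δ / 2 * (μ S).toReal ≤ K * nrm x * (δ ^ 2 / 2) := by
    calc δ / 2 * (μ S).toReal ≤ ∫ v in S, g v ∂μ := step1
      _ ≤ ∫ v, g v ∂μ := step2
      _ = ∫ s, (∫ v, f v s ∂μ) ∂ρ := step3
      _ ≤ ∫ s, K * nrm x * s ∂ρ := step4
      _ = K * nrm x * (δ ^ 2 / 2) := step5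
  have hfinal : (μ S).toReal ≤ K * nrm x * δ := by
    have h2 : 0 < δ / 2 := by positivity
    nlinarith [key]
  calc (μ S).toReal ≤ K * nrm x * δ := hfinal
    _ = 2 * K / t := by rw [hδdef]; field_simp
end

section
/- Let S be a set, H a Hilbert space, and f : S → H any map. Then there exists a Hilbert space H' and a map g : S → H' such that ‖g(x₁) - g(x₂)‖_{H'} = ‖f(x₁) - f(x₂)‖_H^{1/2} for all x₁, x₂ ∈ S. -/
set_option linter.unusedSectionVars false
set_option maxHeartbeats 1000000

open MeasureTheory Finset Metric

section SnowflakeAux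

variable {S : Type} {H : Type*} [NormedAddCommGroup H] [InnerProductSpace ℝ H]


lemma zero_sum_quad {ι : Type*} {F : Type*} [SeminormedAddCommGroup F] [InnerProductSpace ℝ F]
    (s : Finset ι) (α : ι → ℝ) (w : ι → F) (h : ∑ i ∈ s, α i = 0) :
    ∑ i ∈ s, ∑ j ∈ s, α i * α j * ‖w i - w j‖ ^ 2
      = -2 * ‖∑ i ∈ s, α i • w i‖ ^ 2 := by
  have key : ∀ i j, α i * α j * ‖w i - w j‖ ^ 2
      = α i * ‖w i‖ ^ 2 * α j + α i * (α j * ‖w j‖ ^ 2)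
        - 2 * (α i * α j * inner ℝ (w i) (w j)) := by
    intro i j
    rw [@norm_sub_sq_real]
    ring
  have hinner : ‖∑ i ∈ s, α i • w i‖ ^ 2
      = ∑ i ∈ s, ∑ j ∈ s, α i * α j * inner ℝ (w i) (w j) := by
    rw [← real_inner_self_eq_norm_sq, sum_inner]
    refine Finset.sum_congr rfl fun i hi => ?_
    rw [real_inner_smul_left, inner_sum, Finset.mul_sum]
    refine Finset.sum_congr rfl fun j hj => ?_
    rw [real_inner_smul_right]
    ring
  simp only [key, Finset.sum_sub_distrib, Finset.sum_add_distrib, ← Finset.sum_mul,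
    ← Finset.mul_sum, h, mul_zero, zero_mul, Finset.sum_const_zero, zero_add, zero_sub]
  rw [hinner, Finset.mul_sum]
  rw [← Finset.mul_sum]; ring

lemma vIco (a b : ℝ) : (volume : Measure ℝ) (Set.Ico a b) ≠ ⊤ := by
  simp [Real.volume_Ico]

noncomputable def psi (s : ℝ) : Lp ℝ 2 (volume : Measure ℝ) :=
  indicatorConstLp 2 (s := Set.Ico 0 s) measurableSet_Ico (vIco 0 s) (1 : ℝ)
    - indicatorConstLp 2 (s := Set.Ico s 0) measurableSet_Ico (vIco s 0) (1 : ℝ)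

lemma psi_sub (s t : ℝ) (hst : s ≤ t) :
    psi t - psi s
      = indicatorConstLp 2 (s := Set.Ico s t) measurableSet_Ico
          (vIco _ _) (1 : ℝ) := by
  apply Lp.ext
  have h1 := indicatorConstLp_coeFn (μ := (volume : Measure ℝ)) (p := 2)
    (hs := measurableSet_Ico (a := (0:ℝ)) (b := t)) (hμs := vIco _ _) (c := (1:ℝ))
  have h2 := indicatorConstLp_coeFn (μ := (volume : Measure ℝ)) (p := 2)
    (hs := measurableSet_Ico (a := t) (b := (0:ℝ))) (hμs := vIco _ _) (c := (1:ℝ))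
  have h3 := indicatorConstLp_coeFn (μ := (volume : Measure ℝ)) (p := 2)
    (hs := measurableSet_Ico (a := (0:ℝ)) (b := s)) (hμs := vIco _ _) (c := (1:ℝ))
  have h4 := indicatorConstLp_coeFn (μ := (volume : Measure ℝ)) (p := 2)
    (hs := measurableSet_Ico (a := s) (b := (0:ℝ))) (hμs := vIco _ _) (c := (1:ℝ))
  have h5 := indicatorConstLp_coeFn (μ := (volume : Measure ℝ)) (p := 2)
    (hs := measurableSet_Ico (a := s) (b := t)) (hμs := vIco _ _) (c := (1:ℝ))
  have hsub2 := Lp.coeFn_sub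
    (indicatorConstLp 2 (s := Set.Ico (0:ℝ) t) measurableSet_Ico (vIco _ _) (1 : ℝ))
    (indicatorConstLp 2 (s := Set.Ico t (0:ℝ)) measurableSet_Ico (vIco _ _) (1 : ℝ))
  have hsub3 := Lp.coeFn_sub
    (indicatorConstLp 2 (s := Set.Ico (0:ℝ) s) measurableSet_Ico (vIco _ _) (1 : ℝ))
    (indicatorConstLp 2 (s := Set.Ico s (0:ℝ)) measurableSet_Ico (vIco _ _) (1 : ℝ))
  unfold psi
  have hsub0 := Lp.coeFn_sub
    (indicatorConstLp 2 (s := Set.Ico (0:ℝ) t) measurableSet_Ico (vIco 0 t) (1 : ℝ)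
      - indicatorConstLp 2 (s := Set.Ico t (0:ℝ)) measurableSet_Ico (vIco t 0) (1 : ℝ))
    (indicatorConstLp 2 (s := Set.Ico (0:ℝ) s) measurableSet_Ico (vIco 0 s) (1 : ℝ)
      - indicatorConstLp 2 (s := Set.Ico s (0:ℝ)) measurableSet_Ico (vIco s 0) (1 : ℝ))
  filter_upwards [h1, h2, h3, h4, h5, hsub0, hsub2, hsub3] with u e1 e2 e3 e4 e5 e0 e7 e8
  rw [e0, Pi.sub_apply, e7, e8, Pi.sub_apply, Pi.sub_apply, e1, e2, e3, e4, e5]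
  rcases lt_or_ge u 0 with h0 | h0 <;> rcases lt_or_ge u s with hs | hs <;>
      rcases lt_or_ge u t with ht | ht <;>
    simp only [Set.indicator_apply, Set.mem_Ico, h0, hs, ht, Pi.sub_apply] <;>
      split_ifs <;> norm_num <;> linarith

lemma norm_psi_sub' {s t : ℝ} (hst : s ≤ t) : ‖psi t - psi s‖ ^ 2 = t - s := by
  rw [psi_sub s t hst, norm_indicatorConstLp (by norm_num) (by norm_num)]
  rw [Real.volume_real_Ico]
  simp only [norm_one, one_mul]
  rw [max_eq_left (by linarith)]
  rw [show (1 / ENNReal.toReal 2) = (1/2 : ℝ) by norm_num, ← Real.sqrt_eq_rpow,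
    Real.sq_sqrt (by linarith)]

lemma norm_psi_sub (s t : ℝ) : ‖psi s - psi t‖ ^ 2 = |s - t| := by
  rcases le_total s t with h | h
  · rw [norm_sub_rev, norm_psi_sub' h, abs_sub_comm, abs_of_nonneg (by linarith)]
  · rw [norm_psi_sub' h, abs_of_nonneg (by linarith)]

-- 1-D negative type
lemma oneD_neg_type {ι : Type*} (s : Finset ι) (α : ι → ℝ) (r : ι → ℝ)
    (h : ∑ i ∈ s, α i = 0) :
    ∑ i ∈ s, ∑ j ∈ s, α i * α j * |r i - r j| ≤ 0 := by
  have : ∀ i j, |r i - r j| = ‖psi (r i) - psi (r j)‖ ^ 2 := fun i j => (norm_psi_sub _ _).symm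
  simp only [this]
  rw [zero_sum_quad s α (fun i => psi (r i)) h]
  nlinarith [norm_nonneg (∑ i ∈ s, α i • psi (r i)), sq_nonneg ‖∑ i ∈ s, α i • psi (r i)‖]

variable {n : ℕ}

local notation "E" n => EuclideanSpace ℝ (Fin n)

noncomputable def ballC (n : ℕ) (hn : 0 < n) : ℝ :=
  ∫ ω in closedBall (0 : EuclideanSpace ℝ (Fin n)) 1, |ω ⟨0, hn⟩|

lemma integrableOn_abs_inner (x : EuclideanSpace ℝ (Fin n)) :
    IntegrableOn (fun ω : EuclideanSpace ℝ (Fin n) => |(inner ℝ ω x : ℝ)|)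
      (closedBall 0 1) volume := by
  apply ContinuousOn.integrableOn_compact (isCompact_closedBall _ _)
  exact ((continuous_id.inner continuous_const).abs).continuousOn

lemma ballC_pos (hn : 0 < n) : 0 < ballC n hn := by
  rw [ballC]
  rw [setIntegral_pos_iff_support_of_nonneg_ae]
  · have hsub : closedBall (0 : EuclideanSpace ℝ (Fin n)) 1 \
        (LinearMap.ker (EuclideanSpace.projₗ (𝕜 := ℝ) (⟨0, hn⟩ : Fin n)) : Set (EuclideanSpace ℝ (Fin n)))
        ⊆ Function.support (fun ω : EuclideanSpace ℝ (Fin n) => |ω ⟨0, hn⟩|) ∩ closedBall 0 1 := by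
      rintro ω ⟨hball, hker⟩
      refine ⟨?_, hball⟩
      simp only [Function.mem_support, ne_eq, abs_eq_zero]
      intro h
      exact hker (by simpa [LinearMap.mem_ker] using h)
    refine lt_of_lt_of_le ?_ (measure_mono hsub)
    rw [measure_diff_null]
    · exact measure_closedBall_pos _ _ one_pos
    · apply Measure.addHaar_submodule
      intro htop
      have : (EuclideanSpace.single (⟨0, hn⟩ : Fin n) (1:ℝ)) ∈
          LinearMap.ker (EuclideanSpace.projₗ (𝕜 := ℝ) (⟨0, hn⟩ : Fin n)) := htop ▸ Submodule.mem_top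
      simp [LinearMap.mem_ker] at this
  · filter_upwards with ω using abs_nonneg _
  · apply ContinuousOn.integrableOn_compact (isCompact_closedBall _ _)
    exact (continuous_abs.comp (EuclideanSpace.proj (𝕜 := ℝ) (⟨0, hn⟩ : Fin n)).continuous).continuousOn

lemma integral_abs_inner (hn : 0 < n) (x : EuclideanSpace ℝ (Fin n)) :
    ∫ ω in closedBall (0 : EuclideanSpace ℝ (Fin n)) 1, |(inner ℝ ω x : ℝ)|
      = ballC n hn * ‖x‖ := by
  rcases eq_or_ne x 0 with rfl | hx
  · simp
  -- u is a unit vector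
  set u : EuclideanSpace ℝ (Fin n) := ‖x‖⁻¹ • x with hu
  have hux : x = ‖x‖ • u := by
    rw [hu, smul_smul, mul_inv_cancel₀ (norm_ne_zero_iff.2 hx), one_smul]
  have hun : ‖u‖ = 1 := by
    rw [hu, norm_smul, norm_inv, norm_norm, inv_mul_cancel₀ (norm_ne_zero_iff.2 hx)]
  -- orthonormal basis with b i0 = u
  have hcard : Module.finrank ℝ (EuclideanSpace ℝ (Fin n)) = Fintype.card (Fin n) := by
    simp
  have horth : Orthonormal ℝ (Set.restrict {(⟨0, hn⟩ : Fin n)} (fun _ => u)) := by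
    rw [orthonormal_iff_ite]
    rintro ⟨i, hi⟩ ⟨j, hj⟩
    simp only [Set.mem_singleton_iff] at hi hj
    subst hi; subst hj
    simp only [if_true]
    have := real_inner_self_eq_norm_sq u
    rw [hun] at this
    exact this.trans (one_pow 2)
  obtain ⟨b, hb⟩ := horth.exists_orthonormalBasis_extension_of_card_eq hcard
  have hbu : b ⟨0, hn⟩ = u := hb _ rfl
  -- change of variables by the isometry b.repr
  have hmp := b.measurePreserving_repr
  have hemb : MeasurableEmbedding b.repr :=
    b.repr.toHomeomorph.measurableEmbedding
  have hpre : b.repr ⁻¹' (closedBall 0 1) = closedBall 0 1 := by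
    ext ω
    simp [mem_closedBall, dist_eq_norm, b.repr.norm_map]
  have key : ∀ ω, |(inner ℝ ω x : ℝ)| = ‖x‖ * |(b.repr ω) ⟨0, hn⟩| := by
    intro ω
    have : (inner ℝ ω x : ℝ) = ‖x‖ * inner ℝ (b.repr ω) (EuclideanSpace.single ⟨0, hn⟩ (1:ℝ)) := by
      calc (inner ℝ ω x : ℝ) = inner ℝ ω (‖x‖ • u) := by rw [← hux]
        _ = ‖x‖ * (inner ℝ ω u : ℝ) := real_inner_smul_right _ _ _
        _ = ‖x‖ * (inner ℝ (b.repr ω) (b.repr u) : ℝ) := by rw [b.repr.inner_map_map]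
        _ = ‖x‖ * inner ℝ (b.repr ω) (EuclideanSpace.single ⟨0, hn⟩ (1:ℝ)) := by
              rw [← hbu, b.repr_self]
    rw [this, abs_mul, abs_norm]
    congr 2
    rw [EuclideanSpace.inner_single_right]
    simp
  simp only [key]
  rw [integral_const_mul]
  rw [mul_comm (ballC n hn) ‖x‖]
  congr 1
  have := hmp.setIntegral_preimage_emb hemb
    (f := b.repr) (fun v : EuclideanSpace ℝ (Fin n) => |v ⟨0, hn⟩|) (closedBall 0 1)
  rw [hpre] at this
  rw [this, ballC]

lemma euclid_neg_type {ι : Type*} {n : ℕ} (s : Finset ι) (α : ι → ℝ)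
    (v : ι → EuclideanSpace ℝ (Fin n)) (h : ∑ i ∈ s, α i = 0) :
    ∑ i ∈ s, ∑ j ∈ s, α i * α j * ‖v i - v j‖ ≤ 0 := by
  rcases Nat.eq_zero_or_pos n with rfl | hn
  · have : ∀ i j, ‖v i - v j‖ = 0 := by
      intro i j
      rw [norm_eq_zero]
      exact Subsingleton.elim _ _
    simp [this]
  · have key : ∀ i j, ‖v i - v j‖
        = (ballC n hn)⁻¹ * ∫ ω in closedBall (0 : EuclideanSpace ℝ (Fin n)) 1,
            |(inner ℝ ω (v i - v j) : ℝ)| := by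
      intro i j
      rw [integral_abs_inner hn]
      rw [inv_mul_cancel_left₀ (ballC_pos hn).ne']
    simp only [key]
    have swap : ∑ i ∈ s, ∑ j ∈ s, α i * α j *
        ((ballC n hn)⁻¹ * ∫ ω in closedBall (0 : EuclideanSpace ℝ (Fin n)) 1,
            |(inner ℝ ω (v i - v j) : ℝ)|)
        = (ballC n hn)⁻¹ * ∫ ω in closedBall (0 : EuclideanSpace ℝ (Fin n)) 1,
            ∑ i ∈ s, ∑ j ∈ s, α i * α j * |(inner ℝ ω (v i - v j) : ℝ)| := by
      rw [integral_finset_sum]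
      · rw [Finset.mul_sum]
        refine Finset.sum_congr rfl fun i hi => ?_
        rw [integral_finset_sum]
        · rw [Finset.mul_sum]
          refine Finset.sum_congr rfl fun j hj => ?_
          rw [integral_const_mul]
          ring
        · intro j hj
          exact (integrableOn_abs_inner (v i - v j)).const_mul _
      · intro i hi
        apply integrable_finset_sum
        intro j hj
        exact (integrableOn_abs_inner (v i - v j)).const_mul _
    rw [swap]
    apply mul_nonpos_of_nonneg_of_nonpos (inv_nonneg.2 (ballC_pos hn).le)
    apply integral_nonpos
    intro ω
    have : ∀ i j, |(inner ℝ ω (v i - v j) : ℝ)| = |(inner ℝ ω (v i) : ℝ) - inner ℝ ω (v j)| := by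
      intro i j
      rw [inner_sub_right]
    simp only [this]
    exact oneD_neg_type s α (fun i => inner ℝ ω (v i)) h

lemma hilbert_neg_type {ι : Type*} {F : Type*} [NormedAddCommGroup F] [InnerProductSpace ℝ F]
    (s : Finset ι) (α : ι → ℝ) (v : ι → F) (h : ∑ i ∈ s, α i = 0) :
    ∑ i ∈ s, ∑ j ∈ s, α i * α j * ‖v i - v j‖ ≤ 0 := by
  classical
  set W : Submodule ℝ F := Submodule.span ℝ (v '' ↑s) with hW
  have : FiniteDimensional ℝ W := FiniteDimensional.span_of_finite ℝ ((s.finite_toSet).image v)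
  set d := Module.finrank ℝ W with hd
  set b := stdOrthonormalBasis ℝ W with hb
  set v' : ι → EuclideanSpace ℝ (Fin d) :=
    fun i => if hm : v i ∈ W then b.repr ⟨v i, hm⟩ else 0 with hv'
  have key : ∀ i ∈ s, ∀ j ∈ s, ‖v i - v j‖ = ‖v' i - v' j‖ := by
    intro i hi j hj
    have hmi : v i ∈ W := Submodule.subset_span ⟨i, hi, rfl⟩
    have hmj : v j ∈ W := Submodule.subset_span ⟨j, hj, rfl⟩
    simp only [hv', dif_pos hmi, dif_pos hmj]
    rw [← LinearIsometryEquiv.map_sub, b.repr.norm_map]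
    rfl
  calc ∑ i ∈ s, ∑ j ∈ s, α i * α j * ‖v i - v j‖
      = ∑ i ∈ s, ∑ j ∈ s, α i * α j * ‖v' i - v' j‖ := by
        refine Finset.sum_congr rfl fun i hi => Finset.sum_congr rfl fun j hj => ?_
        rw [key i hi j hj]
    _ ≤ 0 := euclid_neg_type s α v' h



/-- The positive-definite kernel associated to the distance kernel via base point `o`. -/
noncomputable def Bker (f : S → H) (o : S) (x y : S) : ℝ :=
  (‖f x - f o‖ + ‖f y - f o‖ - ‖f x - f y‖) / 2

lemma Bker_psd (f : S → H) (o : S) (t : Finset S) (α : S → ℝ) :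
    0 ≤ ∑ x ∈ t, ∑ y ∈ t, α x * α y * Bker f o x y := by
  classical
  set Sa := ∑ x ∈ t, α x with hSa
  set P := ∑ x ∈ t, α x * ‖f x - f o‖ with hP
  set Q := ∑ x ∈ t, ∑ y ∈ t, α x * α y * ‖f x - f y‖ with hQ
  -- the negative-type inequality for the extended family
  set m : Finset (Option S) := t.map Function.Embedding.some with hm
  have hnone : (none : Option S) ∉ m := by simp [hm]
  set α' : Option S → ℝ := fun z => Option.elim z (-Sa) α with hα'
  set v' : Option S → H := fun z => f (z.getD o) with hv'
  have hsum : ∑ z ∈ insert none m, α' z = 0 := by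
    rw [Finset.sum_insert hnone, hm, Finset.sum_map]
    simp [hα', hSa]
  have hND := hilbert_neg_type (insert none m) α' v' hsum
  have expand2 : ∑ z ∈ insert none m, ∑ w ∈ insert none m, α' z * α' w * ‖v' z - v' w‖
      = Q - 2 * Sa * P := by
    rw [Finset.sum_insert hnone]
    rw [Finset.sum_insert hnone]
    rw [hm, Finset.sum_map, Finset.sum_map]
    have e1 : ∀ x ∈ t, ∑ w ∈ insert none (t.map Function.Embedding.some),
        α' (Function.Embedding.some x) * α' w * ‖v' (Function.Embedding.some x) - v' w‖
        = α x * (-Sa) * ‖f x - f o‖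
          + ∑ y ∈ t, α x * α y * ‖f x - f y‖ := by
      intro x hx
      rw [Finset.sum_insert hnone, Finset.sum_map]
      simp [hα', hv']
    rw [Finset.sum_congr rfl e1, Finset.sum_add_distrib]
    have e2 : ∑ y ∈ t, α' none * α' (Function.Embedding.some y) * ‖v' none - v' (Function.Embedding.some y)‖
        = -Sa * P := by
      simp only [hα', hv', Option.elim, Option.getD, Function.Embedding.some_apply]
      rw [Finset.mul_sum]
      refine Finset.sum_congr rfl fun y hy => ?_
      rw [norm_sub_rev]
      ring
    rw [e2]
    have e3 : ∑ x ∈ t, α x * (-Sa) * ‖f x - f o‖ = -Sa * P := by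
      rw [hP, Finset.mul_sum]
      exact Finset.sum_congr rfl fun x hx => by ring
    rw [e3]
    simp only [hα', hv', Option.elim, Option.getD]
    rw [sub_self, norm_zero]
    rw [← hQ]
    ring
  rw [expand2] at hND
  -- expand the B-sum
  have h1 : ∑ x ∈ t, ∑ y ∈ t, α x * α y * ‖f x - f o‖ = P * Sa := by
    have e : ∀ x y, α x * α y * ‖f x - f o‖ = (α x * ‖f x - f o‖) * α y := fun _ _ => by ring
    simp only [e, ← Finset.mul_sum, ← hSa]
    rw [← Finset.sum_mul, hP]
  have h2 : ∑ x ∈ t, ∑ y ∈ t, α x * α y * ‖f y - f o‖ = Sa * P := by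
    have e : ∀ (x y : S), α x * α y * ‖f y - f o‖ = α x * (α y * ‖f y - f o‖) := fun _ _ => by ring
    simp only [e, ← Finset.mul_sum, ← hP]
    rw [← Finset.sum_mul, ← hSa]
  have expand1 : ∑ x ∈ t, ∑ y ∈ t, α x * α y * Bker f o x y = Sa * P - Q / 2 := by
    have e : ∀ x y, α x * α y * Bker f o x y
        = (α x * α y * ‖f x - f o‖) / 2 + (α x * α y * ‖f y - f o‖) / 2
          - (α x * α y * ‖f x - f y‖) / 2 := by
      intro x y
      rw [Bker]
      ring
    simp only [e, Finset.sum_add_distrib, Finset.sum_sub_distrib, ← Finset.sum_div]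
    rw [h1, h2, ← hQ]
    ring
  rw [expand1]
  linarith


namespace Snowflake

/-- The candidate inner product on finitely supported functions. -/
noncomputable def I (f : S → H) (o : S) (α β : S →₀ ℝ) : ℝ :=
  ∑ x ∈ α.support, ∑ y ∈ β.support, α x * β y * Bker f o x y

lemma I_eq (f : S → H) (o : S) (α β : S →₀ ℝ) {t u : Finset S}
    (ht : α.support ⊆ t) (hu : β.support ⊆ u) :
    I f o α β = ∑ x ∈ t, ∑ y ∈ u, α x * β y * Bker f o x y := by
  rw [I]
  rw [Finset.sum_subset ht]
  · refine Finset.sum_congr rfl fun x hx => ?_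
    rw [Finset.sum_subset hu]
    intro y hy hyn
    rw [Finsupp.notMem_support_iff.1 hyn]
    ring
  · intro x hx hxn
    apply Finset.sum_eq_zero
    intro y hy
    rw [Finsupp.notMem_support_iff.1 hxn]
    ring

lemma I_symm (f : S → H) (o : S) (α β : S →₀ ℝ) : I f o α β = I f o β α := by
  rw [I, I, Finset.sum_comm]
  refine Finset.sum_congr rfl fun y hy => Finset.sum_congr rfl fun x hx => ?_
  have : Bker f o x y = Bker f o y x := by
    rw [Bker, Bker, norm_sub_rev (f x) (f y)]
    ring
  rw [this]
  ring

lemma I_add_left (f : S → H) (o : S) (α α' β : S →₀ ℝ) :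
    I f o (α + α') β = I f o α β + I f o α' β := by
  classical
  set t := (α + α').support ∪ (α.support ∪ α'.support) with hts
  have h1 : (α + α').support ⊆ t := Finset.subset_union_left
  have h2 : α.support ⊆ t := Finset.subset_union_left.trans Finset.subset_union_right
  have h3 : α'.support ⊆ t := Finset.subset_union_right.trans Finset.subset_union_right
  rw [I_eq f o _ β h1 (subset_refl _), I_eq f o α β h2 (subset_refl _),
    I_eq f o α' β h3 (subset_refl _), ← Finset.sum_add_distrib]
  refine Finset.sum_congr rfl fun x hx => ?_
  rw [← Finset.sum_add_distrib]
  refine Finset.sum_congr rfl fun y hy => ?_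
  rw [Finsupp.add_apply]
  ring

lemma I_smul_left (f : S → H) (o : S) (r : ℝ) (α β : S →₀ ℝ) :
    I f o (r • α) β = r * I f o α β := by
  rw [I_eq f o (r • α) β (Finsupp.support_smul) (subset_refl _), I, Finset.mul_sum]
  refine Finset.sum_congr rfl fun x hx => ?_
  rw [Finset.mul_sum]
  refine Finset.sum_congr rfl fun y hy => ?_
  rw [Finsupp.smul_apply, smul_eq_mul]
  ring

lemma I_nonneg (f : S → H) (o : S) (α : S →₀ ℝ) : 0 ≤ I f o α α :=
  Bker_psd f o α.support α

end Snowflake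

namespace Snowflake

noncomputable def preCore (f : S → H) (o : S) : PreInnerProductSpace.Core ℝ (S →₀ ℝ) where
  inner := I f o
  conj_inner_symm := fun x y => by
    simp only [starRingEnd_apply, star_trivial]
    exact I_symm f o y x
  re_inner_nonneg := fun x => by simpa using I_nonneg f o x
  add_left := fun x y z => I_add_left f o x y z
  smul_left := fun x y r => by
    simp only [starRingEnd_apply, star_trivial]
    exact I_smul_left f o r x y

@[reducible]
noncomputable def semiNorm (f : S → H) (o : S) : SeminormedAddCommGroup (S →₀ ℝ) :=
  @InnerProductSpace.Core.toSeminormedAddCommGroup ℝ (S →₀ ℝ) _ _ _ (preCore f o)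

@[reducible]
noncomputable def ips (f : S → H) (o : S) :
    @InnerProductSpace ℝ (S →₀ ℝ) _ (semiNorm f o) :=
  letI := semiNorm f o
  letI : NormedSpace ℝ (S →₀ ℝ) :=
    @InnerProductSpace.Core.toNormedSpace ℝ (S →₀ ℝ) _ _ _ (preCore f o)
  { (preCore f o) with
    norm_sq_eq_re_inner := fun x => by
      have h₁ : ‖x‖ ^ 2 = Real.sqrt (RCLike.re ((preCore f o).inner x x)) ^ 2 := rfl
      have h₂ : 0 ≤ RCLike.re ((preCore f o).inner x x) := (preCore f o).re_inner_nonneg x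
      rw [h₁]
      exact Real.sq_sqrt (by simpa using h₂) }

lemma I_single (f : S → H) (o : S) (x y : S) :
    I f o (Finsupp.single x (1:ℝ)) (Finsupp.single y (1:ℝ)) = Bker f o x y := by
  rw [I, Finsupp.support_single_ne_zero x one_ne_zero,
    Finsupp.support_single_ne_zero y one_ne_zero, Finset.sum_singleton, Finset.sum_singleton,
    Finsupp.single_eq_same, Finsupp.single_eq_same]
  ring

end Snowflake


end SnowflakeAux

theorem stmt_9 {S : Type} {H : Type*}
    [NormedAddCommGroup H] [InnerProductSpace ℝ H] [CompleteSpace H]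
    (f : S → H) :
    ∃ (H' : Type) (_ : NormedAddCommGroup H') (_ : InnerProductSpace ℝ H')
      (_ : CompleteSpace H') (g : S → H'),
      ∀ x₁ x₂ : S, ‖g x₁ - g x₂‖ = Real.sqrt ‖f x₁ - f x₂‖ := by
  classical
  by_cases hS : Nonempty S
  · obtain ⟨o⟩ := hS
    letI : SeminormedAddCommGroup (S →₀ ℝ) := Snowflake.semiNorm f o
    letI : InnerProductSpace ℝ (S →₀ ℝ) := Snowflake.ips f o
    refine ⟨UniformSpace.Completion (SeparationQuotient (S →₀ ℝ)), inferInstance, inferInstance,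
      inferInstance,
      fun x => ((SeparationQuotient.mk (Finsupp.single x (1:ℝ)) : SeparationQuotient (S →₀ ℝ)) :
        UniformSpace.Completion (SeparationQuotient (S →₀ ℝ))), ?_⟩
    intro x₁ x₂
    have hnorm : ‖((SeparationQuotient.mk (Finsupp.single x₁ (1:ℝ)) : SeparationQuotient (S →₀ ℝ)) :
          UniformSpace.Completion (SeparationQuotient (S →₀ ℝ)))
        - ((SeparationQuotient.mk (Finsupp.single x₂ (1:ℝ)) : SeparationQuotient (S →₀ ℝ)) :
          UniformSpace.Completion (SeparationQuotient (S →₀ ℝ)))‖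
        = ‖Finsupp.single x₁ (1:ℝ) - Finsupp.single x₂ (1:ℝ)‖ := by
      rw [← UniformSpace.Completion.coe_sub, UniformSpace.Completion.norm_coe,
        ← SeparationQuotient.mk_sub, SeparationQuotient.norm_mk]
    rw [hnorm]
    have hinner : ∀ a b : S →₀ ℝ, (inner ℝ a b : ℝ) = Snowflake.I f o a b := fun _ _ => rfl
    have hI : (inner ℝ (Finsupp.single x₁ (1:ℝ) - Finsupp.single x₂ (1:ℝ))
        (Finsupp.single x₁ (1:ℝ) - Finsupp.single x₂ (1:ℝ)) : ℝ) = ‖f x₁ - f x₂‖ := by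
      rw [inner_sub_left, inner_sub_right, inner_sub_right]
      simp only [hinner, Snowflake.I_single]
      rw [show Bker f o x₂ x₁ = Bker f o x₁ x₂ by
        rw [Bker, Bker, norm_sub_rev (f x₁) (f x₂)]; ring]
      rw [Bker, Bker, Bker]
      rw [sub_self, norm_zero, sub_self, norm_zero]
      ring
    have hsq : ‖Finsupp.single x₁ (1:ℝ) - Finsupp.single x₂ (1:ℝ)‖ ^ 2 = ‖f x₁ - f x₂‖ := by
      rw [← real_inner_self_eq_norm_sq, hI]
    rw [← hsq, Real.sqrt_sq (norm_nonneg _)]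
  · exact ⟨ℝ, inferInstance, inferInstance, inferInstance, fun _ => 0,
      fun x₁ => (hS ⟨x₁⟩).elim⟩
end

section
/- A kernel K : S × S → ℝ admits a representation K(s₁,s₂) = ‖f(s₁) - f(s₂)‖²_H for some map f from S to a real Hilbert space H if and only if K is symmetric, K(s,s) = 0 for all s ∈ S, and K is negative-definite (i.e., Σ_{i,j} α_i α_j K(s_i,s_j) ≤ 0 for all finite collections with Σ_i α_i = 0). -/
open Finsupp
open scoped RealInnerProductSpace

noncomputable def ipsOfPre {F : Type} [AddCommGroup F] [Module ℝ F]
    (c : PreInnerProductSpace.Core ℝ F) :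
    letI := @InnerProductSpace.Core.toSeminormedAddCommGroup ℝ F _ _ _ c
    InnerProductSpace ℝ F :=
  letI := @InnerProductSpace.Core.toSeminormedAddCommGroup ℝ F _ _ _ c
  letI := @InnerProductSpace.Core.toNormedSpace ℝ F _ _ _ c
  { c with
    norm_sq_eq_re_inner := fun x => by
      have h : ‖x‖ = Real.sqrt (RCLike.re (c.inner x x)) := rfl
      rw [h, Real.sq_sqrt (c.re_inner_nonneg x)] }

theorem Bapply' {S : Type} (K : S → S → ℝ) (x y : S →₀ ℝ) :
    Finsupp.lift ((S →₀ ℝ) →ₗ[ℝ] ℝ) ℝ S (fun s => Finsupp.lift ℝ ℝ S (fun t => K s t)) x y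
      = ∑ s ∈ x.support, ∑ t ∈ y.support, x s * y t * K s t := by
  rw [Finsupp.lift_apply]
  rw [Finsupp.sum, LinearMap.coe_sum, Finset.sum_apply]
  refine Finset.sum_congr rfl fun s _ => ?_
  rw [LinearMap.smul_apply, Finsupp.lift_apply, Finsupp.sum, smul_eq_mul, Finset.mul_sum]
  refine Finset.sum_congr rfl fun t _ => ?_
  simp [mul_comm, mul_assoc, mul_left_comm]

theorem negdef_finsupp {S : Type} (K : S → S → ℝ)
    (hneg : ∀ (n : ℕ) (α : Fin n → ℝ) (s : Fin n → S), (∑ i, α i) = 0 →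
        ∑ i, ∑ j, α i * α j * K (s i) (s j) ≤ 0)
    (c : S →₀ ℝ) (hc : ∑ s ∈ c.support, c s = 0) :
    ∑ s ∈ c.support, ∑ t ∈ c.support, c s * c t * K s t ≤ 0 := by
  classical
  set T := c.support with hT
  let e := T.equivFin
  have h2 : ∑ s ∈ T, ∑ t ∈ T, c s * c t * K s t
      = ∑ i, ∑ j, c (e.symm i) * c (e.symm j) * K (e.symm i) (e.symm j) := by
    rw [← Finset.sum_coe_sort T]
    refine Fintype.sum_equiv e _ _ (fun s => ?_)
    rw [← Finset.sum_coe_sort T]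
    exact Fintype.sum_equiv e _ _ (fun t => by simp)
  rw [h2]
  refine hneg T.card (fun i => c (e.symm i)) (fun i => (e.symm i : S)) ?_
  rw [← hc, ← Finset.sum_coe_sort T (fun s => c s)]
  exact Fintype.sum_equiv e.symm _ _ (fun i => rfl)

theorem stmt_11 {S : Type} (K : S → S → ℝ) :
    (∃ (H : Type) (_ : NormedAddCommGroup H) (_ : InnerProductSpace ℝ H)
      (_ : CompleteSpace H) (f : S → H),
      ∀ s₁ s₂ : S, K s₁ s₂ = ‖f s₁ - f s₂‖ ^ 2) ↔
    ((∀ s₁ s₂ : S, K s₁ s₂ = K s₂ s₁) ∧ (∀ s : S, K s s = 0) ∧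
      ∀ (n : ℕ) (α : Fin n → ℝ) (s : Fin n → S), (∑ i, α i) = 0 →
        ∑ i, ∑ j, α i * α j * K (s i) (s j) ≤ 0) := by
  constructor
  · rintro ⟨H, _, _, _, f, hf⟩
    refine ⟨fun s₁ s₂ => by rw [hf, hf, norm_sub_rev], fun s => by simp [hf], ?_⟩
    intro n α s hα
    have split : ∑ i, ∑ j, α i * α j * K (s i) (s j)
        = (∑ i, ∑ j, α i * α j * ‖f (s i)‖ ^ 2) + (∑ i, ∑ j, α i * α j * ‖f (s j)‖ ^ 2)
          - 2 * ∑ i, ∑ j, α i * α j * ⟪f (s i), f (s j)⟫ := by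
      rw [Finset.mul_sum, ← Finset.sum_add_distrib, ← Finset.sum_sub_distrib]
      refine Finset.sum_congr rfl fun i _ => ?_
      rw [Finset.mul_sum, ← Finset.sum_add_distrib, ← Finset.sum_sub_distrib]
      refine Finset.sum_congr rfl fun j _ => ?_
      rw [hf, norm_sub_sq_real]; ring
    have e1 : ∑ i, ∑ j, α i * α j * ‖f (s i)‖ ^ 2 = 0 := by
      have : ∀ i : Fin n, ∑ j, α i * α j * ‖f (s i)‖ ^ 2
          = α i * ‖f (s i)‖ ^ 2 * ∑ j, α j := by
        intro i; rw [Finset.mul_sum]; exact Finset.sum_congr rfl fun j _ => by ring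
      simp [this, hα]
    have e2 : ∑ i, ∑ j, α i * α j * ‖f (s j)‖ ^ 2 = 0 := by
      have : ∀ i : Fin n, ∑ j, α i * α j * ‖f (s j)‖ ^ 2
          = α i * ∑ j, α j * ‖f (s j)‖ ^ 2 := by
        intro i; rw [Finset.mul_sum]; exact Finset.sum_congr rfl fun j _ => by ring
      rw [Finset.sum_congr rfl fun i _ => this i, ← Finset.sum_mul, hα, zero_mul]
    have e3 : ∑ i, ∑ j, α i * α j * ⟪f (s i), f (s j)⟫
        = ⟪∑ i, α i • f (s i), ∑ j, α j • f (s j)⟫ := by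
      rw [sum_inner]
      refine Finset.sum_congr rfl fun i _ => ?_
      rw [real_inner_smul_left, inner_sum, Finset.mul_sum]
      refine Finset.sum_congr rfl fun j _ => ?_
      rw [real_inner_smul_right]; ring
    rw [split, e1, e2, e3]
    have hnn : (0:ℝ) ≤ ⟪∑ i, α i • f (s i), ∑ j, α j • f (s j)⟫ := real_inner_self_nonneg
    linarith
  · rintro ⟨hsym, hdiag, hneg⟩
    by_cases hS : Nonempty S
    · obtain ⟨s₀⟩ := hS
      classical
      set V := (S →₀ ℝ) with hV
      set T : V →ₗ[ℝ] ℝ := Finsupp.lift ℝ ℝ S (fun _ => 1) with hTdef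
      set L : V →ₗ[ℝ] ℝ := Finsupp.lift ℝ ℝ S (fun s => K s s₀) with hLdef
      set B : V →ₗ[ℝ] V →ₗ[ℝ] ℝ :=
        Finsupp.lift ((S →₀ ℝ) →ₗ[ℝ] ℝ) ℝ S (fun s => Finsupp.lift ℝ ℝ S (fun t => K s t))
        with hBdef
      have hBss : ∀ (s t : S) (a b : ℝ),
          B (Finsupp.single s a) (Finsupp.single t b) = a * b * K s t := by
        intro s t a b
        rw [hBdef, Finsupp.lift_apply, Finsupp.sum_single_index (by simp),
          LinearMap.smul_apply, Finsupp.lift_apply, Finsupp.sum_single_index (by simp)]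
        simp [mul_assoc]
      have hTs : ∀ (s : S) (a : ℝ), T (Finsupp.single s a) = a := by
        intro s a
        rw [hTdef, Finsupp.lift_apply, Finsupp.sum_single_index (by simp)]; simp
      have hLs : ∀ (s : S) (a : ℝ), L (Finsupp.single s a) = a * K s s₀ := by
        intro s a
        rw [hLdef, Finsupp.lift_apply, Finsupp.sum_single_index (by simp)]; simp
      have hBr : ∀ x : V, B x (Finsupp.single s₀ 1) = L x := by
        intro x
        have : (LinearMap.flip B) (Finsupp.single s₀ 1) = L :=
          Finsupp.lhom_ext fun s a => by
            simp only [LinearMap.flip_apply, hBss, hLs]; ring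
        calc B x (Finsupp.single s₀ 1) = (LinearMap.flip B) (Finsupp.single s₀ 1) x := rfl
          _ = L x := by rw [this]
      have hBl : ∀ x : V, B (Finsupp.single s₀ 1) x = L x := by
        intro x
        have : B (Finsupp.single s₀ 1) = L :=
          Finsupp.lhom_ext fun s a => by
            simp only [hBss, hLs, hsym s₀ s]; ring
        rw [this]
      have hBsymm : ∀ x y : V, B x y = B y x := by
        have : B = LinearMap.flip B :=
          Finsupp.lhom_ext fun s a => Finsupp.lhom_ext fun t b => by
            simp only [LinearMap.flip_apply, hBss, hsym s t]; ring
        intro x y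
        conv_lhs => rw [this]
        rw [LinearMap.flip_apply]
      have hTsum : ∀ x : V, T x = ∑ s ∈ x.support, x s := by
        intro x
        rw [hTdef, Finsupp.lift_apply, Finsupp.sum]; simp
      have hBnn : ∀ x : V, 2 * (T x * L x) - B x x ≥ 0 := by
        intro x
        set cv : V := x - T x • Finsupp.single s₀ 1 with hcv
        have hc0 : ∑ s ∈ cv.support, cv s = 0 := by
          rw [← hTsum]
          simp [hcv, map_sub, map_smul, hTs]
        have h1 : ∑ s ∈ cv.support, ∑ t ∈ cv.support, cv s * cv t * K s t ≤ 0 :=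
          negdef_finsupp K hneg cv hc0
        have h2 : B cv cv = B x x - 2 * (T x * L x) := by
          simp only [hcv, map_sub, map_smul, LinearMap.sub_apply, LinearMap.smul_apply,
            smul_eq_mul, hBr, hBl]
          rw [hLs s₀ 1, hdiag s₀]
          ring
        have h3 : B cv cv ≤ 0 := by rw [hBdef] at *; rw [Bapply' K cv cv] at *; exact h1
        linarith [h2 ▸ h3]
      set inn : Inner ℝ V := ⟨fun x y => (T x * L y + T y * L x - B x y) / 2⟩ with hinn
      have hinner : ∀ x y : V, (inner ℝ x y : ℝ) = (T x * L y + T y * L x - B x y) / 2 :=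
        fun x y => rfl
      set c : PreInnerProductSpace.Core ℝ V :=
        { inn with
          conj_inner_symm := fun x y => by
            simp only [starRingEnd_apply, star_trivial, hinner, hBsymm x y]
            ring
          re_inner_nonneg := fun x => by
            simp only [RCLike.re_to_real, hinner]
            have := hBnn x
            linarith
          add_left := fun x y z => by
            simp only [hinner, map_add, LinearMap.add_apply]
            ring
          smul_left := fun x y r => by
            simp only [hinner, map_smul, LinearMap.smul_apply, smul_eq_mul,
              starRingEnd_apply, star_trivial]
            ring } with hc
      letI : SeminormedAddCommGroup V := @InnerProductSpace.Core.toSeminormedAddCommGroup ℝ V _ _ _ c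
      letI : InnerProductSpace ℝ V := ipsOfPre c
      refine ⟨UniformSpace.Completion V, inferInstance, inferInstance, inferInstance,
        fun s => (Finsupp.single s 1 : V), ?_⟩
      intro s₁ s₂
      rw [← UniformSpace.Completion.coe_sub, UniformSpace.Completion.norm_coe]
      have hns : ∀ z : V, ‖z‖ ^ 2 = (inner ℝ z z : ℝ) := fun z =>
        (real_inner_self_eq_norm_sq z).symm
      rw [hns]
      set d : V := Finsupp.single s₁ 1 - Finsupp.single s₂ 1 with hd
      have hTd : T d = 0 := by simp [hd, map_sub, hTs]
      have hBd : B d d = -(2 * K s₁ s₂) := by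
        simp only [hd, map_sub, LinearMap.sub_apply, hBss, hdiag, hsym s₂ s₁]
        ring
      have : (inner ℝ d d : ℝ) = (T d * L d + T d * L d - B d d) / 2 := rfl
      rw [this, hTd, hBd]
      ring
    · refine ⟨ℝ, inferInstance, inferInstance, inferInstance,
        fun s => (hS ⟨s⟩).elim, fun s₁ _ => (hS ⟨s₁⟩).elim⟩
end

section
/- For any real Hilbert space H, the function h ↦ e^{-‖h‖²} is positive-definite on H: for every n, every α₁,…,α_n ∈ ℝ, and every h₁,…,h_n ∈ H, Σ_{i,j=1}^n α_i α_j e^{-‖h_i - h_j‖²} ≥ 0. -/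
open Finset
open scoped MatrixOrder

/-- Hadamard powers of a PSD matrix give nonnegative quadratic forms. -/
lemma hadamard_pow_quad_nonneg {n : ℕ} (G : Matrix (Fin n) (Fin n) ℝ)
    (hG : G.PosSemidef) (c : Fin n → ℝ) (k : ℕ) :
    0 ≤ ∑ i, ∑ j, c i * c j * G i j ^ k := by
  set B := CFC.sqrt G with hBdef
  have hBsym : ∀ a b, B a b = B b a := fun a b => by
    have := (Matrix.nonneg_iff_posSemidef.mp (CFC.sqrt_nonneg G)).1.apply b a
    simpa using this
  have hBB : ∀ i j, G i j = ∑ a, B a i * B a j := by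
    intro i j
    have h2 : (B * B) i j = G i j := by rw [hBdef, CFC.sqrt_mul_sqrt_self G hG.nonneg]
    rw [← h2, Matrix.mul_apply]
    exact Finset.sum_congr rfl fun a _ => by rw [hBsym i a]
  set d : (Fin k → Fin n) → Fin n → ℝ := fun f i => c i * ∏ l, B (f l) i with hd
  have expand : ∀ i j, c i * c j * G i j ^ k = ∑ f : Fin k → Fin n, d f i * d f j := by
    intro i j
    rw [hBB i j]
    have h3 : (∑ a, B a i * B a j) ^ k = ∏ _l : Fin k, (∑ a, B a i * B a j) := by
      simp [Finset.prod_const]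
    rw [h3, Finset.prod_univ_sum, Finset.mul_sum]
    refine Finset.sum_congr rfl fun f _ => ?_
    simp only [hd]
    rw [Finset.prod_mul_distrib]
    ring
  calc ∑ i, ∑ j, c i * c j * G i j ^ k
      = ∑ i, ∑ j, ∑ f : Fin k → Fin n, d f i * d f j := by
        exact Finset.sum_congr rfl fun i _ => Finset.sum_congr rfl fun j _ => expand i j
    _ = ∑ i, ∑ f : Fin k → Fin n, ∑ j, d f i * d f j := by
        exact Finset.sum_congr rfl fun i _ => Finset.sum_comm
    _ = ∑ f : Fin k → Fin n, ∑ i, ∑ j, d f i * d f j := Finset.sum_comm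
    _ = ∑ f : Fin k → Fin n, (∑ i, d f i) ^ 2 := by
        refine Finset.sum_congr rfl fun f _ => ?_
        rw [sq, Finset.sum_mul_sum]
    _ ≥ 0 := Finset.sum_nonneg fun f _ => sq_nonneg _

theorem stmt_12 {H : Type*} [NormedAddCommGroup H] [InnerProductSpace ℝ H]
    [CompleteSpace H] (n : ℕ) (α : Fin n → ℝ) (h : Fin n → H) :
    0 ≤ ∑ i, ∑ j, α i * α j * Real.exp (-‖h i - h j‖ ^ 2) := by
  set G : Matrix (Fin n) (Fin n) ℝ := fun i j => inner ℝ (h i) (h j) with hGdef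
  have hG : G.PosSemidef := by
    refine Matrix.PosSemidef.of_dotProduct_mulVec_nonneg ?_ ?_
    · ext i j
      exact real_inner_comm (h i) (h j)
    · intro x
      have h1 : dotProduct (star x) (G.mulVec x)
          = ∑ i, ∑ j, x i * x j * inner ℝ (h i) (h j) := by
        simp only [dotProduct, Matrix.mulVec, dotProduct, hGdef, Pi.star_apply,
          star_trivial, Finset.mul_sum]
        exact Finset.sum_congr rfl fun i _ => Finset.sum_congr rfl fun j _ => by ring
      have h2 : (inner ℝ (∑ i, x i • h i) (∑ j, x j • h j) : ℝ)
          = ∑ i, ∑ j, x i * x j * inner ℝ (h i) (h j) := by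
        simp_rw [sum_inner, inner_sum, real_inner_smul_left, real_inner_smul_right]
        exact Finset.sum_congr rfl fun i _ => Finset.sum_congr rfl fun j _ => by ring
      rw [h1, ← h2]
      exact real_inner_self_nonneg
  set β : Fin n → ℝ := fun i => α i * Real.exp (-‖h i‖ ^ 2) with hβ
  have hterm : ∀ i j, α i * α j * Real.exp (-‖h i - h j‖ ^ 2)
      = β i * β j * Real.exp (2 * G i j) := by
    intro i j
    have hnorm : ‖h i - h j‖ ^ 2 = ‖h i‖ ^ 2 - 2 * G i j + ‖h j‖ ^ 2 := by
      simpa [hGdef] using @norm_sub_sq_real H _ _ (h i) (h j)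
    rw [hnorm, hβ]
    rw [show -(‖h i‖ ^ 2 - 2 * G i j + ‖h j‖ ^ 2)
        = -‖h i‖ ^ 2 + -‖h j‖ ^ 2 + 2 * G i j by ring, Real.exp_add, Real.exp_add]
    ring
  simp_rw [hterm]
  have hexp : ∀ i j, β i * β j * Real.exp (2 * G i j)
      = ∑' k : ℕ, β i * β j * ((2 * G i j) ^ k / k.factorial) := by
    intro i j
    rw [Real.exp_eq_exp_ℝ, NormedSpace.exp_eq_tsum_div, ← tsum_mul_left]
  simp_rw [hexp]
  have hsummable : ∀ i j : Fin n,
      Summable (fun k : ℕ => β i * β j * ((2 * G i j) ^ k / k.factorial)) :=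
    fun i j => (Real.summable_pow_div_factorial (2 * G i j)).mul_left _
  rw [show ∑ i, ∑ j, ∑' k : ℕ, β i * β j * ((2 * G i j) ^ k / (k.factorial : ℝ))
      = ∑' k : ℕ, ∑ i, ∑ j, β i * β j * ((2 * G i j) ^ k / k.factorial) by
    rw [Summable.tsum_finsetSum (fun i _ => summable_sum fun j _ => hsummable i j)]
    exact Finset.sum_congr rfl fun i _ => (Summable.tsum_finsetSum (fun j _ => hsummable i j)).symm]
  refine tsum_nonneg fun k => ?_
  have hre : ∀ i j, β i * β j * ((2 * G i j) ^ k / (k.factorial : ℝ))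
      = (2 ^ k / k.factorial) * (β i * β j * G i j ^ k) := by
    intro i j; rw [mul_pow]; ring
  simp_rw [hre, ← Finset.mul_sum]
  exact mul_nonneg (by positivity) (hadamard_pow_quad_nonneg G hG β k)
end

section
/- Let X' be a finite metric space, 0 < s₁ < s₂ and 0 < τ₁ < τ₂ < τ₃ be reals, and suppose X' admits no (s₁,s₂,τ₁,τ₂,τ₃)-threshold map into ℓ₂. Then there exist two finitely-supported symmetric probability measures μ₁, μ₂ on X' × X' such that μ₁ is supported on pairs at distance ≤ s₁, μ₂ is supported on pairs at distance ≥ s₂, and for every map f : X' → ℓ₂: E_{(x,y)∼μ₁}[‖f(x)-f(y)‖²] ≥ (τ₁/τ₂)² · E_{(x,y)∼μ₂}[‖f(x)-f(y)‖²] − (2τ₁/τ₃)² · sup_{x∈X'}‖f(x)‖². -/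
open scoped Classical RealInnerProductSpace

theorem inner_lp_single (i j : ℕ) (a b : ℝ) :
    ⟪(lp.single 2 i a : lp (fun _ : ℕ => ℝ) 2), lp.single 2 j b⟫
      = if i = j then a * b else 0 := by
  rw [lp.inner_single_left, lp.single_apply]
  by_cases h : i = j
  · subst h; simp [RCLike.inner_apply]; ring
  · rw [Pi.single_apply, if_neg h, if_neg h]; simp

theorem exists_realization {X' : Type} [Fintype X'] (G : Matrix X' X' ℝ)
    (hG : G.PosSemidef) :
    ∃ F : X' → lp (fun _ : ℕ => ℝ) 2, ∀ x y, ⟪F x, F y⟫ = G x y := by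
  classical
  obtain ⟨R, hRsym, hmul⟩ : ∃ R : Matrix X' X' ℝ, (∀ k x, R k x = R x k) ∧ R * R = G := by
    open scoped MatrixOrder in
    refine ⟨CFC.sqrt G, fun k x => ?_, CFC.sqrt_mul_sqrt_self G hG.nonneg⟩
    have h := (CFC.sqrt_nonneg G).1
    have := congrFun (congrFun h k) x
    simpa [Matrix.conjTranspose_apply, sub_zero] using this.symm
  let e := Fintype.equivFin X'
  refine ⟨fun x => ∑ k : X', R k x • lp.single 2 (e k : ℕ) (1 : ℝ), fun x y => ?_⟩
  rw [sum_inner]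
  have : ∀ k : X', ⟪R k x • (lp.single 2 (e k : ℕ) (1:ℝ) : lp (fun _ : ℕ => ℝ) 2),
        ∑ l : X', R l y • lp.single 2 (e l : ℕ) (1:ℝ)⟫ = R k x * R k y := by
    intro k
    rw [inner_sum]
    have h2 : ∀ l : X', ⟪R k x • (lp.single 2 (e k : ℕ) (1:ℝ) : lp (fun _ : ℕ => ℝ) 2),
        R l y • lp.single 2 (e l : ℕ) (1:ℝ)⟫
        = if k = l then R k x * R k y else 0 := by
      intro l
      rw [real_inner_smul_left, real_inner_smul_right, inner_lp_single]
      by_cases hkl : k = l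
      · subst hkl; simp
      · have : (e k : ℕ) ≠ (e l : ℕ) := by
          simp [Fin.val_eq_val, hkl, e.injective.ne hkl]
        simp [this, hkl]
    rw [Finset.sum_congr rfl (fun l _ => h2 l)]
    simp
  rw [Finset.sum_congr rfl (fun k _ => this k)]
  have := congrFun (congrFun hmul x) y
  rw [← this, Matrix.mul_apply]
  exact Finset.sum_congr rfl fun k _ => by rw [hRsym k x]



theorem schoenberg {X' : Type} [Fintype X'] [Nonempty X'] (D : X' × X' → ℝ)
    (hsym : ∀ x y, D (x, y) = D (y, x)) (hdiag : ∀ x, D (x, x) = 0)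
    (hneg : ∀ b : X' → ℝ, (∑ x, b x) = 0 → (∑ x, ∑ y, b x * b y * D (x, y)) ≤ 0) :
    ∃ F : X' → lp (fun _ : ℕ => ℝ) 2, ∀ x y, ‖F x - F y‖ ^ 2 = D (x, y) := by
  classical
  obtain ⟨x₀⟩ := ‹Nonempty X'›
  set G : Matrix X' X' ℝ := Matrix.of fun x y => (D (x, x₀) + D (y, x₀) - D (x, y)) / 2 with hGdef
  have hGapp : ∀ x y, G x y = (D (x, x₀) + D (y, x₀) - D (x, y)) / 2 := fun x y => rfl
  have hGsym : ∀ x y, G x y = G y x := by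
    intro x y; rw [hGapp, hGapp, hsym x y]; ring
  have hPSD : G.PosSemidef := by
    refine Matrix.PosSemidef.of_dotProduct_mulVec_nonneg ?_ ?_
    · ext i j
      simp only [Matrix.conjTranspose_apply, star_trivial]
      exact hGsym j i
    · intro v
      set s := ∑ z, v z with hs
      set b : X' → ℝ := fun x => v x - (if x = x₀ then s else 0) with hb
      have hbsum : (∑ x, b x) = 0 := by
        simp only [hb, Finset.sum_sub_distrib, Finset.sum_ite_eq' Finset.univ x₀,
          Finset.mem_univ, if_true, hs]
        ring
      have hkey := hneg b hbsum
      have hexp : ∀ x y : X', b x * b y * D (x, y)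
          = v x * v y * D (x, y)
            - (if y = x₀ then s * (v x * D (x, y)) else 0)
            - (if x = x₀ then s * (v y * D (x, y)) else 0)
            + (if x = x₀ then (if y = x₀ then s * s * D (x, y) else 0) else 0) := by
        intro x y
        simp only [hb]
        by_cases hx : x = x₀ <;> by_cases hy : y = x₀ <;> simp [hx, hy] <;> ring
      have hT2 : (∑ x, ∑ y, (if y = x₀ then s * (v x * D (x, y)) else 0))
          = s * ∑ x, v x * D (x, x₀) := by
        rw [Finset.mul_sum]
        refine Finset.sum_congr rfl fun x _ => ?_
        rw [Finset.sum_ite_eq' Finset.univ x₀ (fun y => s * (v x * D (x, y)))]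
        simp
      have hT3 : (∑ x, ∑ y, (if x = x₀ then s * (v y * D (x, y)) else 0))
          = s * ∑ x, v x * D (x, x₀) := by
        have e1 : ∀ x : X', (∑ y, (if x = x₀ then s * (v y * D (x, y)) else 0))
            = (if x = x₀ then (∑ y, s * (v y * D (x, y))) else 0) := by
          intro x; split <;> simp
        rw [Finset.sum_congr rfl fun x _ => e1 x,
          Finset.sum_ite_eq' Finset.univ x₀ (fun x => ∑ y, s * (v y * D (x, y))),
          if_pos (Finset.mem_univ x₀), Finset.mul_sum]
        refine Finset.sum_congr rfl fun y _ => ?_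
        rw [hsym x₀ y]
      have hT4 : (∑ x, ∑ y, (if x = x₀ then (if y = x₀ then s * s * D (x, y) else 0) else 0))
          = 0 := by
        have e1 : ∀ x : X', (∑ y, (if x = x₀ then (if y = x₀ then s * s * D (x, y) else 0) else 0))
            = (if x = x₀ then s * s * D (x, x₀) else 0) := by
          intro x
          split
          · rw [Finset.sum_ite_eq' Finset.univ x₀ (fun y => s * s * D (x, y))]; simp
          · simp
        rw [Finset.sum_congr rfl fun x _ => e1 x,
          Finset.sum_ite_eq' Finset.univ x₀ (fun x => s * s * D (x, x₀)),
          if_pos (Finset.mem_univ x₀), hdiag, mul_zero]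
      have hbig : (∑ x, ∑ y, b x * b y * D (x, y))
          = (∑ x, ∑ y, v x * v y * D (x, y)) - 2 * s * (∑ x, v x * D (x, x₀)) := by
        calc (∑ x, ∑ y, b x * b y * D (x, y))
            = ∑ x, ∑ y, (v x * v y * D (x, y)
              - (if y = x₀ then s * (v x * D (x, y)) else 0)
              - (if x = x₀ then s * (v y * D (x, y)) else 0)
              + (if x = x₀ then (if y = x₀ then s * s * D (x, y) else 0) else 0)) :=
              Finset.sum_congr rfl fun x _ => Finset.sum_congr rfl fun y _ => hexp x y
          _ = (∑ x, ∑ y, v x * v y * D (x, y))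
              - (∑ x, ∑ y, (if y = x₀ then s * (v x * D (x, y)) else 0))
              - (∑ x, ∑ y, (if x = x₀ then s * (v y * D (x, y)) else 0))
              + (∑ x, ∑ y, (if x = x₀ then (if y = x₀ then s * s * D (x, y) else 0) else 0)) := by
              simp [Finset.sum_add_distrib, Finset.sum_sub_distrib]
          _ = _ := by rw [hT2, hT3, hT4]; ring
      have h3 : (∑ x, ∑ y, v x * v y * D (x, x₀)) = s * ∑ x, v x * D (x, x₀) := by
        rw [Finset.mul_sum]
        refine Finset.sum_congr rfl fun x _ => ?_
        rw [hs, Finset.sum_mul]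
        refine Finset.sum_congr rfl fun y _ => by ring
      have h4 : (∑ x, ∑ y, v x * v y * D (y, x₀)) = s * ∑ x, v x * D (x, x₀) := by
        rw [Finset.sum_comm]
        rw [Finset.mul_sum]
        refine Finset.sum_congr rfl fun y _ => ?_
        rw [hs, Finset.sum_mul]
        refine Finset.sum_congr rfl fun x _ => by ring
      have hQG : (∑ x, v x * ∑ y, G x y * v y)
          = s * (∑ x, v x * D (x, x₀)) - (∑ x, ∑ y, v x * v y * D (x, y)) / 2 := by
        have h1 : ∀ x, v x * ∑ y, G x y * v y
            = ∑ y, ((v x * v y * D (x, x₀)) / 2 + (v x * v y * D (y, x₀)) / 2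
                - (v x * v y * D (x, y)) / 2) := by
          intro x
          rw [Finset.mul_sum]
          refine Finset.sum_congr rfl fun y _ => ?_
          rw [hGapp]; ring
        rw [Finset.sum_congr rfl fun x _ => h1 x]
        have h2 : ∀ x : X', (∑ y, ((v x * v y * D (x, x₀)) / 2 + (v x * v y * D (y, x₀)) / 2
                - (v x * v y * D (x, y)) / 2))
            = (∑ y, v x * v y * D (x, x₀)) / 2 + (∑ y, v x * v y * D (y, x₀)) / 2
              - (∑ y, v x * v y * D (x, y)) / 2 := by
          intro x
          rw [Finset.sum_sub_distrib, Finset.sum_add_distrib, Finset.sum_div, Finset.sum_div,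
            Finset.sum_div]
        rw [Finset.sum_congr rfl fun x _ => h2 x]
        rw [Finset.sum_sub_distrib, Finset.sum_add_distrib, ← Finset.sum_div, ← Finset.sum_div,
          ← Finset.sum_div, h3, h4]
        ring
      have hdot : dotProduct (star v) (G.mulVec v) = ∑ x, v x * ∑ y, G x y * v y := by
        simp [dotProduct, Matrix.mulVec, star_trivial]
      rw [hdot, hQG]
      rw [hbig] at hkey
      linarith
  obtain ⟨F, hF⟩ := exists_realization G hPSD
  refine ⟨F, fun x y => ?_⟩
  have hx : ‖F x‖ ^ 2 = G x x := by rw [← real_inner_self_eq_norm_sq, hF]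
  have hy : ‖F y‖ ^ 2 = G y y := by rw [← real_inner_self_eq_norm_sq, hF]
  have e : ‖F x - F y‖ ^ 2 = ‖F x‖ ^ 2 - 2 * ⟪F x, F y⟫ + ‖F y‖ ^ 2 := norm_sub_sq_real (F x) (F y)
  rw [hx, hy, hF, hGapp, hGapp, hGapp, hdiag, hdiag] at e
  rw [e]; ring

def coneK (X' : Type) [Fintype X'] : Set (X' × X' → ℝ) :=
  {D | (∀ x y, D (x, y) = D (y, x)) ∧ (∀ x, D (x, x) = 0) ∧
    ∀ b : X' → ℝ, (∑ x, b x) = 0 → (∑ x, ∑ y, b x * b y * D (x, y)) ≤ 0}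

theorem coneK_convex (X' : Type) [Fintype X'] : Convex ℝ (coneK X') := by
  intro D1 h1 D2 h2 a b ha hb hab
  obtain ⟨h1s, h1d, h1n⟩ := h1
  obtain ⟨h2s, h2d, h2n⟩ := h2
  refine ⟨fun x y => ?_, fun x => ?_, fun w hw => ?_⟩
  · simp only [Pi.add_apply, Pi.smul_apply, smul_eq_mul, h1s x y, h2s x y]
  · simp only [Pi.add_apply, Pi.smul_apply, smul_eq_mul, h1d x, h2d x, mul_zero, add_zero]
  · have e : ∀ x y : X', w x * w y * (a • D1 + b • D2) (x, y)
        = a * (w x * w y * D1 (x, y)) + b * (w x * w y * D2 (x, y)) := by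
      intro x y
      simp only [Pi.add_apply, Pi.smul_apply, smul_eq_mul]
      ring
    calc (∑ x, ∑ y, w x * w y * (a • D1 + b • D2) (x, y))
        = ∑ x, ∑ y, (a * (w x * w y * D1 (x, y)) + b * (w x * w y * D2 (x, y))) :=
          Finset.sum_congr rfl fun x _ => Finset.sum_congr rfl fun y _ => e x y
      _ = a * (∑ x, ∑ y, w x * w y * D1 (x, y)) + b * (∑ x, ∑ y, w x * w y * D2 (x, y)) := by
          rw [Finset.mul_sum, Finset.mul_sum, ← Finset.sum_add_distrib]
          refine Finset.sum_congr rfl fun x _ => ?_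
          rw [Finset.mul_sum, Finset.mul_sum, ← Finset.sum_add_distrib]
      _ ≤ 0 := by
          have := h1n w hw
          have := h2n w hw
          have h1' := mul_nonpos_of_nonneg_of_nonpos ha (h1n w hw)
          have h2' := mul_nonpos_of_nonneg_of_nonpos hb (h2n w hw)
          linarith

theorem coneK_closed (X' : Type) [Fintype X'] : IsClosed (coneK X') := by
  have hrw : coneK X' = (⋂ x : X', ⋂ y : X', {D : X' × X' → ℝ | D (x, y) = D (y, x)}) ∩
      ((⋂ x : X', {D : X' × X' → ℝ | D (x, x) = 0}) ∩
       (⋂ b : X' → ℝ, {D : X' × X' → ℝ |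
          (∑ x, b x) = 0 → (∑ x, ∑ y, b x * b y * D (x, y)) ≤ 0})) := by
    ext D
    simp only [coneK, Set.mem_setOf_eq, Set.mem_inter_iff, Set.mem_iInter]
  rw [hrw]
  refine IsClosed.inter ?_ (IsClosed.inter ?_ ?_)
  · exact isClosed_iInter fun x => isClosed_iInter fun y =>
      isClosed_eq (continuous_apply _) (continuous_apply _)
  · exact isClosed_iInter fun x => isClosed_eq (continuous_apply _) continuous_const
  · refine isClosed_iInter fun b => ?_
    by_cases hb : (∑ x, b x) = 0
    · have : {D : X' × X' → ℝ | (∑ x, b x) = 0 → (∑ x, ∑ y, b x * b y * D (x, y)) ≤ 0}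
          = {D : X' × X' → ℝ | (∑ x, ∑ y, b x * b y * D (x, y)) ≤ 0} := by
        ext D; simp [hb]
      rw [this]
      refine isClosed_le ?_ continuous_const
      exact continuous_finset_sum _ fun x _ => continuous_finset_sum _ fun y _ =>
        continuous_const.mul (continuous_apply ((x, y) : X' × X'))
    · have : {D : X' × X' → ℝ | (∑ x, b x) = 0 → (∑ x, ∑ y, b x * b y * D (x, y)) ≤ 0}
          = Set.univ := by
        ext D; simp [hb]
      rw [this]; exact isClosed_univ

theorem coneK_zero (X' : Type) [Fintype X'] : (0 : X' × X' → ℝ) ∈ coneK X' :=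
  ⟨fun _ _ => rfl, fun _ => rfl, fun b _ => by simp⟩

theorem coneK_smul (X' : Type) [Fintype X'] {t : ℝ} (ht : 0 ≤ t) {D : X' × X' → ℝ}
    (hD : D ∈ coneK X') : t • D ∈ coneK X' := by
  obtain ⟨hs, hd, hn⟩ := hD
  refine ⟨fun x y => ?_, fun x => ?_, fun w hw => ?_⟩
  · simp [hs x y]
  · simp [hd x]
  · have e : ∀ x y : X', w x * w y * (t • D) (x, y) = t * (w x * w y * D (x, y)) := by
      intro x y; simp [smul_eq_mul]; ring
    calc (∑ x, ∑ y, w x * w y * (t • D) (x, y))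
        = t * (∑ x, ∑ y, w x * w y * D (x, y)) := by
          rw [Finset.mul_sum]
          refine Finset.sum_congr rfl fun x _ => ?_
          rw [Finset.mul_sum]
          exact Finset.sum_congr rfl fun y _ => e x y
      _ ≤ 0 := mul_nonpos_of_nonneg_of_nonpos ht (hn w hw)

def boxP (X' : Type) [Fintype X'] [MetricSpace X'] (s₁ s₂ τ₁ τ₂ τ₃ : ℝ) :
    Set (X' × X' → ℝ) :=
  {D | (∀ p, 0 ≤ D p) ∧ (∀ p, D p ≤ τ₃ ^ 2) ∧
    (∀ p : X' × X', dist p.1 p.2 ≤ s₁ → D p ≤ τ₁ ^ 2) ∧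
    (∀ p : X' × X', s₂ ≤ dist p.1 p.2 → τ₂ ^ 2 ≤ D p)}

theorem boxP_convex (X' : Type) [Fintype X'] [MetricSpace X'] (s₁ s₂ τ₁ τ₂ τ₃ : ℝ) :
    Convex ℝ (boxP X' s₁ s₂ τ₁ τ₂ τ₃) := by
  intro D1 h1 D2 h2 a b ha hb hab
  obtain ⟨h10, h13, h11, h12⟩ := h1
  obtain ⟨h20, h23, h21, h22⟩ := h2
  refine ⟨fun p => ?_, fun p => ?_, fun p hp => ?_, fun p hp => ?_⟩ <;>
    simp only [Pi.add_apply, Pi.smul_apply, smul_eq_mul]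
  · have := h10 p; have := h20 p; nlinarith
  · have := h13 p; have := h23 p; nlinarith
  · have := h11 p hp; have := h21 p hp; nlinarith
  · have := h12 p hp; have := h22 p hp; nlinarith

theorem boxP_closed (X' : Type) [Fintype X'] [MetricSpace X'] (s₁ s₂ τ₁ τ₂ τ₃ : ℝ) :
    IsClosed (boxP X' s₁ s₂ τ₁ τ₂ τ₃) := by
  have hrw : boxP X' s₁ s₂ τ₁ τ₂ τ₃ =
      (⋂ p : X' × X', {D : X' × X' → ℝ | 0 ≤ D p}) ∩
      ((⋂ p : X' × X', {D : X' × X' → ℝ | D p ≤ τ₃ ^ 2}) ∩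
       ((⋂ p : X' × X', {D : X' × X' → ℝ | dist p.1 p.2 ≤ s₁ → D p ≤ τ₁ ^ 2}) ∩
        (⋂ p : X' × X', {D : X' × X' → ℝ | s₂ ≤ dist p.1 p.2 → τ₂ ^ 2 ≤ D p}))) := by
    ext D
    simp only [boxP, Set.mem_setOf_eq, Set.mem_inter_iff, Set.mem_iInter]
  rw [hrw]
  refine IsClosed.inter ?_ (IsClosed.inter ?_ (IsClosed.inter ?_ ?_))
  · exact isClosed_iInter fun p => isClosed_le continuous_const (continuous_apply p)
  · exact isClosed_iInter fun p => isClosed_le (continuous_apply p) continuous_const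
  · refine isClosed_iInter fun p => ?_
    by_cases hp : dist p.1 p.2 ≤ s₁
    · have : {D : X' × X' → ℝ | dist p.1 p.2 ≤ s₁ → D p ≤ τ₁ ^ 2}
          = {D : X' × X' → ℝ | D p ≤ τ₁ ^ 2} := by ext D; simp [hp]
      rw [this]; exact isClosed_le (continuous_apply p) continuous_const
    · have : {D : X' × X' → ℝ | dist p.1 p.2 ≤ s₁ → D p ≤ τ₁ ^ 2} = Set.univ := by
        ext D; simp [hp]
      rw [this]; exact isClosed_univ
  · refine isClosed_iInter fun p => ?_
    by_cases hp : s₂ ≤ dist p.1 p.2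
    · have : {D : X' × X' → ℝ | s₂ ≤ dist p.1 p.2 → τ₂ ^ 2 ≤ D p}
          = {D : X' × X' → ℝ | τ₂ ^ 2 ≤ D p} := by ext D; simp [hp]
      rw [this]; exact isClosed_le continuous_const (continuous_apply p)
    · have : {D : X' × X' → ℝ | s₂ ≤ dist p.1 p.2 → τ₂ ^ 2 ≤ D p} = Set.univ := by
        ext D; simp [hp]
      rw [this]; exact isClosed_univ

theorem boxP_compact (X' : Type) [Fintype X'] [MetricSpace X'] (s₁ s₂ τ₁ τ₂ τ₃ : ℝ) :
    IsCompact (boxP X' s₁ s₂ τ₁ τ₂ τ₃) := by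
  refine IsCompact.of_isClosed_subset (isCompact_Icc (a := (0 : X' × X' → ℝ))
    (b := fun _ => τ₃ ^ 2)) (boxP_closed X' s₁ s₂ τ₁ τ₂ τ₃) ?_
  intro D hD
  rw [Set.mem_Icc]
  exact ⟨fun p => hD.1 p, fun p => hD.2.1 p⟩

theorem d2_mem_coneK {X' : Type} [Fintype X'] (f : X' → lp (fun _ : ℕ => ℝ) 2) :
    (fun p : X' × X' => ‖f p.1 - f p.2‖ ^ 2) ∈ coneK X' := by
  refine ⟨fun x y => ?_, fun x => by simp, fun b hb => ?_⟩
  · show ‖f x - f y‖ ^ 2 = ‖f y - f x‖ ^ 2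
    rw [norm_sub_rev]
  have hexp : ∀ x y : X', b x * b y * ‖f x - f y‖ ^ 2
      = b x * b y * ‖f x‖ ^ 2 + b x * b y * ‖f y‖ ^ 2 - 2 * (b x * b y * ⟪f x, f y⟫) := by
    intro x y
    rw [norm_sub_sq_real]
    ring
  have h1 : (∑ x, ∑ y, b x * b y * ‖f x‖ ^ 2) = 0 := by
    refine Finset.sum_eq_zero fun x _ => ?_
    have : (∑ y, b x * b y * ‖f x‖ ^ 2) = (∑ y, b y) * (b x * ‖f x‖ ^ 2) := by
      rw [Finset.sum_mul]
      exact Finset.sum_congr rfl fun y _ => by ring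
    rw [this, hb, zero_mul]
  have h2 : (∑ x, ∑ y, b x * b y * ‖f y‖ ^ 2) = 0 := by
    have e : ∀ x, (∑ y, b x * b y * ‖f y‖ ^ 2) = b x * (∑ y, b y * ‖f y‖ ^ 2) := by
      intro x
      rw [Finset.mul_sum]
      exact Finset.sum_congr rfl fun y _ => by ring
    rw [Finset.sum_congr rfl fun x _ => e x, ← Finset.sum_mul, hb, zero_mul]
  have h3 : (∑ x, ∑ y, b x * b y * ⟪f x, f y⟫)
      = ⟪∑ x, b x • f x, ∑ y, b y • f y⟫ := by
    rw [sum_inner]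
    refine Finset.sum_congr rfl fun x _ => ?_
    rw [inner_sum]
    refine Finset.sum_congr rfl fun y _ => ?_
    rw [real_inner_smul_left, real_inner_smul_right]
    ring
  have h4 : (0:ℝ) ≤ ⟪∑ x, b x • f x, ∑ y, b y • f y⟫ := real_inner_self_nonneg
  calc (∑ x, ∑ y, b x * b y * ‖f x - f y‖ ^ 2)
      = (∑ x, ∑ y, (b x * b y * ‖f x‖ ^ 2 + b x * b y * ‖f y‖ ^ 2
          - 2 * (b x * b y * ⟪f x, f y⟫))) :=
        Finset.sum_congr rfl fun x _ => Finset.sum_congr rfl fun y _ => hexp x y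
    _ = (∑ x, ∑ y, b x * b y * ‖f x‖ ^ 2) + (∑ x, ∑ y, b x * b y * ‖f y‖ ^ 2)
        - 2 * (∑ x, ∑ y, b x * b y * ⟪f x, f y⟫) := by
        have e : ∀ x : X', (∑ y, (b x * b y * ‖f x‖ ^ 2 + b x * b y * ‖f y‖ ^ 2
            - 2 * (b x * b y * ⟪f x, f y⟫)))
            = (∑ y, b x * b y * ‖f x‖ ^ 2) + (∑ y, b x * b y * ‖f y‖ ^ 2)
              - 2 * (∑ y, b x * b y * ⟪f x, f y⟫) := by
          intro x
          rw [Finset.sum_sub_distrib, Finset.sum_add_distrib, ← Finset.mul_sum]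
        rw [Finset.sum_congr rfl fun x _ => e x]
        rw [Finset.sum_sub_distrib, Finset.sum_add_distrib, ← Finset.mul_sum]
    _ ≤ 0 := by rw [h1, h2, h3]; linarith

set_option maxHeartbeats 2000000 in
theorem stmt_14 (X' : Type) [Fintype X'] [MetricSpace X'] [Nonempty X']
    (s₁ s₂ τ₁ τ₂ τ₃ : ℝ) (hs : 0 < s₁) (hs' : s₁ < s₂)
    (hτ0 : 0 < τ₁) (hτ1 : τ₁ < τ₂) (hτ2 : τ₂ < τ₃)
    (hno : ¬ ∃ f : X' → lp (fun _ : ℕ => ℝ) 2,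
      (∀ x y : X', dist x y ≤ s₁ → ‖f x - f y‖ ≤ τ₁) ∧
      (∀ x y : X', s₂ ≤ dist x y → τ₂ ≤ ‖f x - f y‖) ∧
      (∀ x y : X', ‖f x - f y‖ ≤ τ₃)) :
    ∃ μ₁ μ₂ : X' × X' → ℝ,
      (∀ p, 0 ≤ μ₁ p) ∧ (∀ p, 0 ≤ μ₂ p) ∧
      (∑ p : X' × X', μ₁ p) = 1 ∧ (∑ p : X' × X', μ₂ p) = 1 ∧
      (∀ x y : X', μ₁ (x, y) = μ₁ (y, x)) ∧
      (∀ x y : X', μ₂ (x, y) = μ₂ (y, x)) ∧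
      (∀ p : X' × X', μ₁ p ≠ 0 → dist p.1 p.2 ≤ s₁) ∧
      (∀ p : X' × X', μ₂ p ≠ 0 → s₂ ≤ dist p.1 p.2) ∧
      ∀ f : X' → lp (fun _ : ℕ => ℝ) 2,
        (τ₁ / τ₂) ^ 2 * ∑ p : X' × X', μ₂ p * ‖f p.1 - f p.2‖ ^ 2
          - (2 * τ₁ / τ₃) ^ 2 * (⨆ x : X', ‖f x‖ ^ 2)
        ≤ ∑ p : X' × X', μ₁ p * ‖f p.1 - f p.2‖ ^ 2 := by
  classical
  have hτ₂pos : 0 < τ₂ := hτ0.trans hτ1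
  have hτ₃pos : 0 < τ₃ := hτ₂pos.trans hτ2
  have hnf : ∀ p : X' × X', dist p.1 p.2 ≤ s₁ → s₂ ≤ dist p.1 p.2 → False :=
    fun p h1 h2 => absurd (le_trans h2 h1) (not_le.2 hs')
  -- disjointness of the box and the cone
  have hdisj : Disjoint (boxP X' s₁ s₂ τ₁ τ₂ τ₃) (coneK X') := by
    rw [Set.disjoint_left]
    intro D hDP hDK
    obtain ⟨F, hF⟩ := schoenberg D hDK.1 hDK.2.1 hDK.2.2
    refine hno ⟨F, fun x y h => ?_, fun x y h => ?_, fun x y => ?_⟩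
    · have h1 := hDP.2.2.1 (x, y) h
      have h2 := hF x y
      nlinarith [norm_nonneg (F x - F y)]
    · have h1 := hDP.2.2.2 (x, y) h
      have h2 := hF x y
      nlinarith [norm_nonneg (F x - F y)]
    · have h1 := hDP.2.1 (x, y)
      have h2 := hF x y
      nlinarith [norm_nonneg (F x - F y)]
  -- separation
  obtain ⟨φ, u, v, hPu, huv, hKv⟩ := geometric_hahn_banach_compact_closed
    (boxP_convex X' s₁ s₂ τ₁ τ₂ τ₃) (boxP_compact X' s₁ s₂ τ₁ τ₂ τ₃)
    (coneK_convex X') (coneK_closed X') hdisj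
  have hv0 : v < 0 := by
    have h0 := hKv 0 (coneK_zero X')
    simpa using h0
  have hφK : ∀ D ∈ coneK X', 0 ≤ φ D := by
    intro D hD
    by_contra h
    push_neg at h
    have ht : 0 < (v - 1) / φ D := div_pos_of_neg_of_neg (by linarith) h
    have := hKv _ (coneK_smul X' ht.le hD)
    rw [map_smul, smul_eq_mul, div_mul_cancel₀ _ (ne_of_lt h)] at this
    linarith
  have hφP : ∀ D ∈ boxP X' s₁ s₂ τ₁ τ₂ τ₃, φ D < 0 :=
    fun D hD => (hPu D hD).trans (huv.trans hv0)
  -- coefficients of the functional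
  set c' : X' × X' → ℝ := fun p => φ (Pi.single p 1) with hc'
  have hrep : ∀ D : X' × X' → ℝ, φ D = ∑ p, D p * c' p := by
    intro D
    conv_lhs => rw [← Finset.univ_sum_single D]
    rw [map_sum]
    refine Finset.sum_congr rfl fun p _ => ?_
    have h : (Pi.single p (D p) : X' × X' → ℝ) = D p • (Pi.single p (1:ℝ) : X' × X' → ℝ) := by
      rw [← Pi.single_smul, smul_eq_mul, mul_one]
    rw [h, map_smul, smul_eq_mul]
  set c : X' × X' → ℝ := fun p => -((c' p + c' p.swap) / 2) with hcdef
  have hcsym : ∀ x y : X', c (x, y) = c (y, x) := by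
    intro x y
    simp only [hcdef, Prod.swap_prod_mk]
    ring
  have hpair : ∀ D : X' × X' → ℝ, (∀ x y, D (x, y) = D (y, x)) →
      (∑ p, c p * D p) = -φ D := by
    intro D hDsym
    have hswap : (∑ p : X' × X', D p * c' p.swap) = ∑ p : X' × X', D p * c' p := by
      have h1 : (∑ p : X' × X', D p * c' p.swap) = ∑ p : X' × X', D p.swap * c' p := by
        refine Fintype.sum_equiv (Equiv.prodComm X' X') _ _ fun p => ?_
        simp only [Equiv.prodComm_apply, Prod.swap_swap]
      rw [h1]
      refine Finset.sum_congr rfl fun p _ => ?_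
      rcases p with ⟨x, y⟩
      rw [show ((x, y) : X' × X').swap = (y, x) from rfl, hDsym y x]
    calc (∑ p, c p * D p) = ∑ p : X' × X', (-(D p * c' p) / 2 + -(D p * c' p.swap) / 2) := by
          refine Finset.sum_congr rfl fun p _ => ?_
          simp only [hcdef]
          ring
      _ = -(∑ p : X' × X', D p * c' p) / 2 + -(∑ p : X' × X', D p * c' p.swap) / 2 := by
          rw [Finset.sum_add_distrib, ← Finset.sum_div, ← Finset.sum_div,
            ← Finset.sum_neg_distrib, ← Finset.sum_neg_distrib]
      _ = -φ D := by rw [hswap, ← hrep D]; ring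
  -- positive and negative parts
  set np : X' × X' → ℝ := fun p => max (-(c p)) 0 with hnp
  set pp : X' × X' → ℝ := fun p => max (c p) 0 with hpp
  have hnp0 : ∀ p, 0 ≤ np p := fun p => le_max_right _ _
  have hpp0 : ∀ p, 0 ≤ pp p := fun p => le_max_right _ _
  have hc_eq : ∀ p, c p = pp p - np p := by
    intro p
    rcases le_total (c p) 0 with h | h
    · simp only [hnp, hpp]
      rw [max_eq_right h, max_eq_left (neg_nonneg.2 h)]
      ring
    · simp only [hnp, hpp]
      rw [max_eq_left h, max_eq_right (neg_nonpos.2 h)]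
      ring
  have hnpsym : ∀ x y : X', np (x, y) = np (y, x) := by
    intro x y; simp only [hnp, hcsym x y]
  have hppsym : ∀ x y : X', pp (x, y) = pp (y, x) := by
    intro x y; simp only [hpp, hcsym x y]
  set lam1 : ℝ := ∑ p : X' × X', if dist p.1 p.2 ≤ s₁ then np p else 0 with hl1
  set lam2 : ℝ := ∑ p : X' × X', if s₂ ≤ dist p.1 p.2 then pp p else 0 with hl2
  set lam3 : ℝ := ∑ p : X' × X', if dist p.1 p.2 ≤ s₁ then 0 else np p with hl3
  have hlam1nn : 0 ≤ lam1 := Finset.sum_nonneg fun p _ => by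
    split_ifs; exacts [hnp0 p, le_refl 0]
  have hlam2nn : 0 ≤ lam2 := Finset.sum_nonneg fun p _ => by
    split_ifs; exacts [hpp0 p, le_refl 0]
  have hlam3nn : 0 ≤ lam3 := Finset.sum_nonneg fun p _ => by
    split_ifs; exacts [le_refl 0, hnp0 p]
  -- the test element of the box
  set l : X' × X' → ℝ := fun p =>
    if dist p.1 p.2 ≤ s₁ then (if c p < 0 then τ₁ ^ 2 else 0)
    else if s₂ ≤ dist p.1 p.2 then (if 0 < c p then τ₂ ^ 2 else τ₃ ^ 2)
    else (if c p < 0 then τ₃ ^ 2 else 0) with hldef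
  have hlP : l ∈ boxP X' s₁ s₂ τ₁ τ₂ τ₃ := by
    refine ⟨fun p => ?_, fun p => ?_, fun p hp => ?_, fun p hp => ?_⟩ <;> simp only [hldef]
    · split_ifs <;> positivity
    · split_ifs <;> nlinarith
    · rw [if_pos hp]; split_ifs <;> nlinarith
    · rw [if_neg (fun h => hnf p h hp), if_pos hp]; split_ifs <;> nlinarith
  have hlsym : ∀ x y : X', l (x, y) = l (y, x) := by
    intro x y
    simp only [hldef]
    rw [show c (y, x) = c (x, y) from (hcsym x y).symm, dist_comm y x]
  have hlval : (∑ p, c p * l p) = τ₂ ^ 2 * lam2 - τ₁ ^ 2 * lam1 - τ₃ ^ 2 * lam3 := by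
    have e : ∀ p : X' × X', c p * l p
        = τ₂ ^ 2 * (if s₂ ≤ dist p.1 p.2 then pp p else 0)
          - τ₁ ^ 2 * (if dist p.1 p.2 ≤ s₁ then np p else 0)
          - τ₃ ^ 2 * (if dist p.1 p.2 ≤ s₁ then 0 else np p) := by
      intro p
      by_cases h1 : dist p.1 p.2 ≤ s₁
      · have h2 : ¬ s₂ ≤ dist p.1 p.2 := fun h => hnf p h1 h
        by_cases h3 : c p < 0
        · simp only [hldef, hnp, hpp, if_pos h1, if_neg h2, if_pos h3]
          rw [max_eq_left (neg_nonneg.2 h3.le)]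
          ring
        · push_neg at h3
          simp only [hldef, hnp, hpp, if_pos h1, if_neg h2, if_neg (not_lt.2 h3)]
          rw [max_eq_right (neg_nonpos.2 h3)]
          ring
      · by_cases h2 : s₂ ≤ dist p.1 p.2
        · by_cases h3 : 0 < c p
          · simp only [hldef, hnp, hpp, if_neg h1, if_pos h2, if_pos h3]
            rw [max_eq_left h3.le, max_eq_right (neg_nonpos.2 h3.le)]
            ring
          · push_neg at h3
            simp only [hldef, hnp, hpp, if_neg h1, if_pos h2, if_neg (not_lt.2 h3)]
            rw [max_eq_right h3, max_eq_left (neg_nonneg.2 h3)]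
            ring
        · by_cases h3 : c p < 0
          · simp only [hldef, hnp, hpp, if_neg h1, if_neg h2, if_pos h3]
            rw [max_eq_left (neg_nonneg.2 h3.le)]
            ring
          · push_neg at h3
            simp only [hldef, hnp, hpp, if_neg h1, if_neg h2, if_neg (not_lt.2 h3)]
            rw [max_eq_right (neg_nonpos.2 h3)]
            ring
    rw [Finset.sum_congr rfl fun p _ => e p, Finset.sum_sub_distrib, Finset.sum_sub_distrib,
      ← Finset.mul_sum, ← Finset.mul_sum, ← Finset.mul_sum, ← hl1, ← hl2, ← hl3]
  have hmain : τ₁ ^ 2 * lam1 + τ₃ ^ 2 * lam3 < τ₂ ^ 2 * lam2 := by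
    have h0 := hφP l hlP
    have h1 : 0 < ∑ p, c p * l p := by rw [hpair l hlsym]; linarith
    rw [hlval] at h1
    linarith
  have hlam2pos : 0 < lam2 := by
    by_contra h
    push_neg at h
    linarith [mul_nonneg (sq_nonneg τ₁) hlam1nn, mul_nonneg (sq_nonneg τ₃) hlam3nn,
      mul_nonpos_of_nonneg_of_nonpos (sq_nonneg τ₂) h]
  -- the diagonal correction
  set n : ℝ := (Fintype.card X' : ℝ) with hn
  have hnpos : 0 < n := by
    rw [hn]; exact_mod_cast Fintype.card_pos
  set eps : ℝ := (τ₂ ^ 2 * lam2 - τ₁ ^ 2 * lam1 - τ₃ ^ 2 * lam3) / (2 * τ₁ ^ 2 * n) with heps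
  have hepspos : 0 < eps := div_pos (by linarith) (by positivity)
  set nu1 : X' × X' → ℝ := fun p =>
    (if dist p.1 p.2 ≤ s₁ then np p else 0) + (if p.1 = p.2 then eps else 0) with hnu1
  set Lam1 : ℝ := lam1 + eps * n with hLam1
  have hLam1pos : 0 < Lam1 := by
    have := mul_pos hepspos hnpos
    rw [hLam1]; linarith
  have hdiagsum : (∑ p : X' × X', (if p.1 = p.2 then eps else 0)) = eps * n := by
    rw [Fintype.sum_prod_type]
    have e : ∀ x : X', (∑ y : X', (if ((x, y) : X' × X').1 = (x, y).2 then eps else 0)) = eps := by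
      intro x
      simp
    rw [Finset.sum_congr rfl fun x _ => e x, Finset.sum_const, nsmul_eq_mul,
      Finset.card_univ, ← hn, mul_comm]
  have hnu1sum : (∑ p, nu1 p) = Lam1 := by
    simp only [hnu1]
    rw [Finset.sum_add_distrib, hdiagsum, ← hl1, hLam1]
  have hτ1eps : τ₁ ^ 2 * (eps * n) = (τ₂ ^ 2 * lam2 - τ₁ ^ 2 * lam1 - τ₃ ^ 2 * lam3) / 2 := by
    have hcan : eps * (2 * τ₁ ^ 2 * n) = τ₂ ^ 2 * lam2 - τ₁ ^ 2 * lam1 - τ₃ ^ 2 * lam3 := by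
      rw [heps]
      exact div_mul_cancel₀ _ (by positivity)
    have hr : τ₁ ^ 2 * (eps * n) = (eps * (2 * τ₁ ^ 2 * n)) / 2 := by ring
    rw [hr, hcan]
  have hΛbound : τ₁ ^ 2 * Lam1 + τ₃ ^ 2 * lam3 ≤ τ₂ ^ 2 * lam2 := by
    rw [hLam1]
    have : τ₁ ^ 2 * (lam1 + eps * n) = τ₁ ^ 2 * lam1 + τ₁ ^ 2 * (eps * n) := by ring
    rw [this, hτ1eps]
    linarith
  -- the measures
  set mu1 : X' × X' → ℝ := fun p => nu1 p / Lam1 with hmu1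
  set mu2 : X' × X' → ℝ := fun p => (if s₂ ≤ dist p.1 p.2 then pp p else 0) / lam2 with hmu2
  have hnu1nn : ∀ p, 0 ≤ nu1 p := by
    intro p
    simp only [hnu1]
    have a1 : (0:ℝ) ≤ if dist p.1 p.2 ≤ s₁ then np p else 0 := by
      split_ifs; exacts [hnp0 p, le_refl 0]
    have a2 : (0:ℝ) ≤ if p.1 = p.2 then eps else 0 := by
      split_ifs; exacts [hepspos.le, le_refl 0]
    linarith
  refine ⟨mu1, mu2, fun p => div_nonneg (hnu1nn p) hLam1pos.le,
    fun p => div_nonneg (by split_ifs; exacts [hpp0 p, le_refl 0]) hlam2pos.le,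
    ?_, ?_, ?_, ?_, ?_, ?_, ?_⟩
  · rw [show (∑ p : X' × X', mu1 p) = ∑ p : X' × X', nu1 p / Lam1 from rfl,
      ← Finset.sum_div, hnu1sum, div_self hLam1pos.ne']
  · rw [show (∑ p : X' × X', mu2 p)
        = ∑ p : X' × X', (if s₂ ≤ dist p.1 p.2 then pp p else 0) / lam2 from rfl,
      ← Finset.sum_div, ← hl2, div_self hlam2pos.ne']
  · intro x y
    have hd : dist ((x, y) : X' × X').1 (x, y).2 = dist ((y, x) : X' × X').1 (y, x).2 :=
      dist_comm x y
    simp only [hmu1, hnu1]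
    rw [hd, hnpsym x y]
    by_cases hxy : x = y
    · subst hxy; rfl
    · rw [if_neg (by exact hxy : ¬ ((x, y) : X' × X').1 = (x, y).2),
        if_neg (by exact fun h => hxy (h.symm) : ¬ ((y, x) : X' × X').1 = (y, x).2)]
  · intro x y
    simp only [hmu2]
    rw [show dist ((x, y) : X' × X').1 (x, y).2 = dist ((y, x) : X' × X').1 (y, x).2 from
      dist_comm x y, hppsym x y]
  · intro p hne
    by_contra h
    refine hne ?_
    have h2 : ¬ p.1 = p.2 := fun he => h (by rw [show dist p.1 p.2 = 0 from by rw [he, dist_self]]; exact hs.le)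
    simp only [hmu1, hnu1, if_neg h, if_neg h2]
    simp
  · intro p hne
    by_contra h
    refine hne ?_
    simp only [hmu2, if_neg h]
    simp
  -- the inequality
  intro f
  set d2 : X' × X' → ℝ := fun p => ‖f p.1 - f p.2‖ ^ 2 with hd2
  have hd2K : d2 ∈ coneK X' := d2_mem_coneK f
  have hd2sym : ∀ x y : X', d2 (x, y) = d2 (y, x) := hd2K.1
  have hd20 : ∀ p, 0 ≤ d2 p := fun p => by simp only [hd2]; positivity
  have hcd2 : (∑ p, c p * d2 p) ≤ 0 := by
    rw [hpair _ hd2sym]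
    have := hφK _ hd2K
    linarith
  set M : ℝ := ⨆ x : X', ‖f x‖ ^ 2 with hM
  have hbdd : BddAbove (Set.range fun x : X' => ‖f x‖ ^ 2) :=
    Set.Finite.bddAbove (Set.finite_range _)
  have hxM : ∀ x, ‖f x‖ ^ 2 ≤ M := fun x => le_ciSup hbdd x
  have hM0 : 0 ≤ M := le_trans (by positivity) (hxM (Classical.arbitrary X'))
  have hd2le : ∀ p, d2 p ≤ 4 * M := by
    intro p
    have h1 := norm_sub_le (f p.1) (f p.2)
    have h3 : ‖f p.1 - f p.2‖ ^ 2 ≤ (‖f p.1‖ + ‖f p.2‖) ^ 2 :=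
      pow_le_pow_left₀ (norm_nonneg _) h1 2
    have h2 : d2 p = ‖f p.1 - f p.2‖ ^ 2 := rfl
    rw [h2]
    nlinarith [hxM p.1, hxM p.2, sq_nonneg (‖f p.1‖ - ‖f p.2‖)]
  set A : ℝ := ∑ p : X' × X', (if dist p.1 p.2 ≤ s₁ then np p else 0) * d2 p with hA
  set B : ℝ := ∑ p : X' × X', (if s₂ ≤ dist p.1 p.2 then pp p else 0) * d2 p with hB
  have hA0 : 0 ≤ A := Finset.sum_nonneg fun p _ => mul_nonneg
    (by split_ifs; exacts [hnp0 p, le_refl 0]) (hd20 p)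
  have key1 : (∑ p, pp p * d2 p) ≤ ∑ p, np p * d2 p := by
    have e : ∀ p, c p * d2 p = pp p * d2 p - np p * d2 p := fun p => by rw [hc_eq p]; ring
    rw [Finset.sum_congr rfl fun p _ => e p, Finset.sum_sub_distrib] at hcd2
    linarith
  have key2 : B ≤ ∑ p, pp p * d2 p := by
    rw [hB]
    refine Finset.sum_le_sum fun p _ => ?_
    split_ifs with h
    · exact le_refl _
    · rw [zero_mul]; exact mul_nonneg (hpp0 p) (hd20 p)
  have key3 : (∑ p, np p * d2 p)
      = A + ∑ p : X' × X', (if dist p.1 p.2 ≤ s₁ then 0 else np p) * d2 p := by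
    rw [hA, ← Finset.sum_add_distrib]
    refine Finset.sum_congr rfl fun p _ => ?_
    split_ifs with h <;> ring
  have key4 : (∑ p : X' × X', (if dist p.1 p.2 ≤ s₁ then 0 else np p) * d2 p)
      ≤ 4 * M * lam3 := by
    calc (∑ p : X' × X', (if dist p.1 p.2 ≤ s₁ then 0 else np p) * d2 p)
        ≤ ∑ p : X' × X', (if dist p.1 p.2 ≤ s₁ then 0 else np p) * (4 * M) := by
          refine Finset.sum_le_sum fun p _ => ?_
          refine mul_le_mul_of_nonneg_left (hd2le p) ?_
          split_ifs; exacts [le_refl 0, hnp0 p]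
      _ = 4 * M * lam3 := by
          rw [← Finset.sum_mul, ← hl3]; ring
  have keyB : B ≤ A + 4 * M * lam3 := by linarith
  -- rewrite the goal sums
  have hsum1 : (∑ p : X' × X', mu1 p * ‖f p.1 - f p.2‖ ^ 2) = A / Lam1 := by
    have ediag : (∑ p : X' × X', (if p.1 = p.2 then eps else 0) * d2 p) = 0 := by
      refine Finset.sum_eq_zero fun p _ => ?_
      split_ifs with h
      · have : d2 p = 0 := by simp only [hd2]; rw [h, sub_self, norm_zero]; ring
        rw [this, mul_zero]
      · rw [zero_mul]
    calc (∑ p : X' × X', mu1 p * ‖f p.1 - f p.2‖ ^ 2)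
        = ∑ p : X' × X', (nu1 p * d2 p) / Lam1 := by
          refine Finset.sum_congr rfl fun p _ => ?_
          simp only [hmu1, hd2]
          ring
      _ = (∑ p : X' × X', nu1 p * d2 p) / Lam1 := by rw [Finset.sum_div]
      _ = A / Lam1 := by
          congr 1
          simp only [hnu1]
          calc (∑ p : X' × X', ((if dist p.1 p.2 ≤ s₁ then np p else 0)
                + (if p.1 = p.2 then eps else 0)) * d2 p)
              = ∑ p : X' × X', ((if dist p.1 p.2 ≤ s₁ then np p else 0) * d2 p
                + (if p.1 = p.2 then eps else 0) * d2 p) := by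
                refine Finset.sum_congr rfl fun p _ => ?_
                ring
            _ = A := by rw [Finset.sum_add_distrib, ediag, ← hA, add_zero]
  have hsum2 : (∑ p : X' × X', mu2 p * ‖f p.1 - f p.2‖ ^ 2) = B / lam2 := by
    calc (∑ p : X' × X', mu2 p * ‖f p.1 - f p.2‖ ^ 2)
        = ∑ p : X' × X', ((if s₂ ≤ dist p.1 p.2 then pp p else 0) * d2 p) / lam2 := by
          refine Finset.sum_congr rfl fun p _ => ?_
          simp only [hmu2, hd2]
          ring
      _ = B / lam2 := by rw [hB, Finset.sum_div]
  rw [hsum1, hsum2]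
  -- final arithmetic
  have hT : 0 < τ₂ ^ 2 * lam2 := by positivity
  have hstep2 : τ₁ ^ 2 * A ≤ (τ₂ ^ 2 * lam2) * (A / Lam1) := by
    rw [← mul_div_assoc, le_div_iff₀ hLam1pos]
    have h1 : τ₁ ^ 2 * Lam1 ≤ τ₂ ^ 2 * lam2 := by
      have := mul_nonneg (sq_nonneg τ₃) hlam3nn
      linarith
    linarith [mul_le_mul_of_nonneg_right h1 hA0]
  have hstep4 : 4 * τ₁ ^ 2 * M * lam3 ≤ 4 * τ₁ ^ 2 * (τ₂ ^ 2 * lam2) * (M / τ₃ ^ 2) := by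
    rw [← mul_div_assoc, le_div_iff₀ (by positivity : (0:ℝ) < τ₃ ^ 2)]
    have h1 : τ₃ ^ 2 * lam3 ≤ τ₂ ^ 2 * lam2 := by
      have := mul_nonneg (sq_nonneg τ₁) hlam1nn
      linarith
    linarith [mul_le_mul_of_nonneg_left h1 (by positivity : (0:ℝ) ≤ 4 * τ₁ ^ 2 * M)]
  have hBmul : τ₁ ^ 2 * B ≤ τ₁ ^ 2 * A + 4 * τ₁ ^ 2 * M * lam3 := by
    linarith [mul_le_mul_of_nonneg_left keyB (sq_nonneg τ₁)]
  have e1 : (τ₁ / τ₂) ^ 2 * (B / lam2) = (τ₁ ^ 2 * B) / (τ₂ ^ 2 * lam2) := by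
    rw [div_pow, div_mul_div_comm]

  have e2 : (2 * τ₁ / τ₃) ^ 2 * M = 4 * τ₁ ^ 2 * (M / τ₃ ^ 2) := by
    ring
  rw [e1, e2, sub_le_iff_le_add, div_le_iff₀ hT]
  have expand : (A / Lam1 + 4 * τ₁ ^ 2 * (M / τ₃ ^ 2)) * (τ₂ ^ 2 * lam2)
      = (τ₂ ^ 2 * lam2) * (A / Lam1) + 4 * τ₁ ^ 2 * (τ₂ ^ 2 * lam2) * (M / τ₃ ^ 2) := by
    ring
  rw [expand]
  linarith
end

section
/- Let X be a metric space and fix 0 < s₁ < s₂ and 0 < τ₁ < τ₂ < τ₃. If every finite subset of X admits an (s₁,s₂,τ₁,τ₂,τ₃)-threshold map into a Hilbert space, then X itself admits an (s₁,s₂,τ₁,τ₂,τ₃)-threshold map into a Hilbert space. -/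
open Filter Finset Topology

noncomputable section Stmt15Aux

variable {X : Type}

/-- Bilinear form on finitely supported functions induced by a kernel. -/
def stmtB (K : X → X → ℝ) : (X →₀ ℝ) →ₗ[ℝ] (X →₀ ℝ) →ₗ[ℝ] ℝ :=
  Finsupp.lsum ℝ fun x => LinearMap.toSpanSingleton ℝ _
    (Finsupp.lsum ℝ fun y => LinearMap.toSpanSingleton ℝ ℝ (K x y))

lemma stmtB_single_single (K : X → X → ℝ) (x y : X) :
    stmtB K (Finsupp.single x 1) (Finsupp.single y 1) = K x y := by
  simp [stmtB, Finsupp.lsum_single, LinearMap.toSpanSingleton_apply]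

lemma stmtB_apply (K : X → X → ℝ) (g h : X →₀ ℝ) :
    stmtB K g h = ∑ x ∈ g.support, ∑ y ∈ h.support, g x * h y * K x y := by
  simp only [stmtB, Finsupp.lsum_apply, Finsupp.sum, LinearMap.toSpanSingleton_apply,
    LinearMap.coe_sum, Finset.sum_apply, LinearMap.smul_apply, smul_eq_mul, Finset.mul_sum]
  exact Finset.sum_congr rfl fun x _ => Finset.sum_congr rfl fun y _ => by ring

lemma stmtB_comm (K : X → X → ℝ) (hK : ∀ x y, K x y = K y x) (g h : X →₀ ℝ) :
    stmtB K g h = stmtB K h g := by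
  rw [stmtB_apply, stmtB_apply, Finset.sum_comm]
  exact Finset.sum_congr rfl fun y _ => Finset.sum_congr rfl fun x _ => by rw [hK x y]; ring

end Stmt15Aux


open Filter Finset Topology

lemma stmt_key {X : Type} [MetricSpace X]
    (s₁ s₂ τ₁ τ₂ τ₃ : ℝ)
    (hfin : ∀ S : Set X, S.Finite →
      ∃ (H : Type) (_ : NormedAddCommGroup H) (_ : InnerProductSpace ℝ H)
        (_ : CompleteSpace H) (f : S → H),
        (∀ x y : S, dist (x : X) (y : X) ≤ s₁ → ‖f x - f y‖ ≤ τ₁) ∧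
        (∀ x y : S, s₂ ≤ dist (x : X) (y : X) → τ₂ ≤ ‖f x - f y‖) ∧
        (∀ x y : S, ‖f x - f y‖ ≤ τ₃))
    (hτ2 : 0 ≤ τ₂) (hτ3 : 0 ≤ τ₃) (x₀ : X) (S : Finset X) :
    ∃ g : X → X → ℝ,
      (∀ x y, |g x y| ≤ τ₃ ^ 2) ∧
      (∀ x y, g x y = g y x) ∧
      (∀ (F : Finset X) (c : X → ℝ),
        0 ≤ ∑ x ∈ F, ∑ y ∈ F, c x * c y * g x y) ∧
      (∀ x, (x = x₀ ∨ x ∈ S) → ∀ y, (y = x₀ ∨ y ∈ S) →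
        (dist x y ≤ s₁ → g x x + g y y - 2 * g x y ≤ τ₁ ^ 2) ∧
        (s₂ ≤ dist x y → τ₂ ^ 2 ≤ g x x + g y y - 2 * g x y) ∧
        (g x x + g y y - 2 * g x y ≤ τ₃ ^ 2)) := by
  classical
  set T : Finset X := insert x₀ S with hT
  obtain ⟨H, i1, i2, i3, f, h1, h2, h3⟩ := hfin (↑T) (T.finite_toSet)
  have hx₀ : x₀ ∈ (↑T : Set X) := by simp [hT]
  set v : X → H := fun x => if hx : x ∈ T then f ⟨x, by exact_mod_cast hx⟩ - f ⟨x₀, hx₀⟩ else 0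
    with hv
  have hvmem : ∀ x (hx : x ∈ T), v x = f ⟨x, by exact_mod_cast hx⟩ - f ⟨x₀, hx₀⟩ := by
    intro x hx; simp [hv, dif_pos hx]
  have hvnorm : ∀ x, ‖v x‖ ≤ τ₃ := by
    intro x
    by_cases hx : x ∈ T
    · rw [hvmem x hx]; exact h3 _ _
    · simp [hv, dif_neg hx, hτ3]
  refine ⟨fun x y => (inner ℝ (v x) (v y) : ℝ), ?_, ?_, ?_, ?_⟩
  · intro x y
    calc |(inner ℝ (v x) (v y) : ℝ)| ≤ ‖v x‖ * ‖v y‖ := abs_real_inner_le_norm _ _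
      _ ≤ τ₃ * τ₃ := mul_le_mul (hvnorm x) (hvnorm y) (norm_nonneg _) hτ3
      _ = τ₃ ^ 2 := (sq τ₃).symm
  · intro x y; exact real_inner_comm _ _
  · intro F c
    have hcalc : ∑ x ∈ F, ∑ y ∈ F, c x * c y * (inner ℝ (v x) (v y) : ℝ)
        = (inner ℝ (∑ x ∈ F, c x • v x) (∑ y ∈ F, c y • v y) : ℝ) := by
      rw [sum_inner]
      refine Finset.sum_congr rfl fun x _ => ?_
      rw [real_inner_smul_left, inner_sum, Finset.mul_sum]
      refine Finset.sum_congr rfl fun y _ => ?_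
      rw [real_inner_smul_right]; ring
    rw [hcalc]
    exact real_inner_self_nonneg
  · intro x hx y hy
    have hx1 : x ∈ T := by
      rcases hx with h | h
      · simp [hT, h]
      · exact Finset.mem_insert_of_mem h
    have hy1 : y ∈ T := by
      rcases hy with h | h
      · simp [hT, h]
      · exact Finset.mem_insert_of_mem h
    have hx' : x ∈ (↑T : Set X) := by exact_mod_cast hx1
    have hy' : y ∈ (↑T : Set X) := by exact_mod_cast hy1
    have hsub : v x - v y = f ⟨x, hx'⟩ - f ⟨y, hy'⟩ := by
      rw [hvmem x hx1, hvmem y hy1]; abel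
    have hE : (inner ℝ (v x) (v x) : ℝ) + (inner ℝ (v y) (v y) : ℝ)
        - 2 * (inner ℝ (v x) (v y) : ℝ) = ‖f ⟨x, hx'⟩ - f ⟨y, hy'⟩‖ ^ 2 := by
      rw [real_inner_self_eq_norm_sq, real_inner_self_eq_norm_sq, ← hsub,
        norm_sub_sq_real]
      ring
    rw [hE]
    have hdxy : dist ((⟨x, hx'⟩ : (↑T : Set X)) : X) ((⟨y, hy'⟩ : (↑T : Set X)) : X)
        = dist x y := rfl
    refine ⟨?_, ?_, ?_⟩
    · intro hd
      exact pow_le_pow_left₀ (norm_nonneg _) (h1 ⟨x, hx'⟩ ⟨y, hy'⟩ (by rw [hdxy]; exact hd)) 2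
    · intro hd
      exact pow_le_pow_left₀ hτ2 (h2 ⟨x, hx'⟩ ⟨y, hy'⟩ (by rw [hdxy]; exact hd)) 2
    · exact pow_le_pow_left₀ (norm_nonneg _) (h3 _ _) 2

theorem stmt_15 (X : Type) [MetricSpace X]
    (s₁ s₂ τ₁ τ₂ τ₃ : ℝ) (hs : 0 < s₁) (hs' : s₁ < s₂)
    (hτ0 : 0 < τ₁) (hτ1 : τ₁ < τ₂) (hτ2 : τ₂ < τ₃)
    (hfin : ∀ S : Set X, S.Finite →
      ∃ (H : Type) (_ : NormedAddCommGroup H) (_ : InnerProductSpace ℝ H)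
        (_ : CompleteSpace H) (f : S → H),
        (∀ x y : S, dist (x : X) (y : X) ≤ s₁ → ‖f x - f y‖ ≤ τ₁) ∧
        (∀ x y : S, s₂ ≤ dist (x : X) (y : X) → τ₂ ≤ ‖f x - f y‖) ∧
        (∀ x y : S, ‖f x - f y‖ ≤ τ₃)) :
    ∃ (H : Type) (_ : NormedAddCommGroup H) (_ : InnerProductSpace ℝ H)
      (_ : CompleteSpace H) (f : X → H),
      (∀ x y : X, dist x y ≤ s₁ → ‖f x - f y‖ ≤ τ₁) ∧
      (∀ x y : X, s₂ ≤ dist x y → τ₂ ≤ ‖f x - f y‖) ∧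
      (∀ x y : X, ‖f x - f y‖ ≤ τ₃) := by
  classical
  rcases isEmpty_or_nonempty X with hX | hX
  · exact ⟨ℝ, inferInstance, inferInstance, inferInstance, fun _ => 0,
      fun x => isEmptyElim x, fun x => isEmptyElim x, fun x => isEmptyElim x⟩
  obtain ⟨x₀⟩ := hX
  have hτ2nn : (0:ℝ) ≤ τ₂ := le_of_lt (hτ0.trans hτ1)
  have hτ3nn : (0:ℝ) ≤ τ₃ := le_of_lt ((hτ0.trans hτ1).trans hτ2)
  choose g hg1 hg2 hg3 hg4 using fun S =>
    stmt_key s₁ s₂ τ₁ τ₂ τ₃ hfin hτ2nn hτ3nn x₀ S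
  let U : Ultrafilter (Finset X) := Ultrafilter.of atTop
  have hU : (U : Filter (Finset X)) ≤ atTop := Ultrafilter.of_le _
  have hlim : ∀ x y : X, ∃ L : ℝ, Tendsto (fun S => g S x y) ↑U (𝓝 L) := by
    intro x y
    obtain ⟨L, -, hL⟩ := (isCompact_Icc (a := -(τ₃ ^ 2)) (b := τ₃ ^ 2)).ultrafilter_le_nhds
      (U.map fun S => g S x y)
      (by
        rw [le_principal_iff]
        refine Filter.mem_map.mpr (Filter.univ_mem' fun S => ?_)
        exact abs_le.mp (hg1 S x y))
    exact ⟨L, by rwa [Filter.Tendsto, ← Ultrafilter.coe_map]⟩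
  choose K hK using hlim
  have hKsymm : ∀ x y, K x y = K y x := by
    intro x y
    have h2 : (fun S => g S x y) = fun S => g S y x := funext fun S => hg2 S x y
    exact tendsto_nhds_unique (hK x y) (h2 ▸ hK y x)
  have hKpsd : ∀ (F : Finset X) (c : X → ℝ),
      0 ≤ ∑ x ∈ F, ∑ y ∈ F, c x * c y * K x y := by
    intro F c
    exact ge_of_tendsto'
      (tendsto_finset_sum _ fun x _ => tendsto_finset_sum _ fun y _ =>
        (hK x y).const_mul (c x * c y))
      (fun S => hg3 S F c)
  have hEK : ∀ x y : X, Tendsto (fun S => g S x x + g S y y - 2 * g S x y) ↑U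
      (𝓝 (K x x + K y y - 2 * K x y)) := fun x y =>
    ((hK x x).add (hK y y)).sub ((hK x y).const_mul 2)
  have hmem : ∀ x y : X, ∀ᶠ S in (↑U : Filter (Finset X)),
      (x = x₀ ∨ x ∈ S) ∧ (y = x₀ ∨ y ∈ S) := by
    intro x y
    have h : ∀ᶠ S in (atTop : Filter (Finset X)),
        (x = x₀ ∨ x ∈ S) ∧ (y = x₀ ∨ y ∈ S) := by
      filter_upwards [Filter.eventually_ge_atTop ({x, y} : Finset X)] with S hS
      exact ⟨Or.inr (Finset.mem_of_subset (Finset.le_iff_subset.mp hS) (by simp)),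
        Or.inr (Finset.mem_of_subset (Finset.le_iff_subset.mp hS) (by simp))⟩
    exact h.filter_mono hU
  have hcond : ∀ x y : X,
      (dist x y ≤ s₁ → K x x + K y y - 2 * K x y ≤ τ₁ ^ 2) ∧
      (s₂ ≤ dist x y → τ₂ ^ 2 ≤ K x x + K y y - 2 * K x y) ∧
      (K x x + K y y - 2 * K x y ≤ τ₃ ^ 2) := by
    intro x y
    refine ⟨fun hd => le_of_tendsto (hEK x y) ?_,
      fun hd => ge_of_tendsto (hEK x y) ?_, le_of_tendsto (hEK x y) ?_⟩
    · filter_upwards [hmem x y] with S hS using (hg4 S x hS.1 y hS.2).1 hd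
    · filter_upwards [hmem x y] with S hS using (hg4 S x hS.1 y hS.2).2.1 hd
    · filter_upwards [hmem x y] with S hS using (hg4 S x hS.1 y hS.2).2.2
  let core : PreInnerProductSpace.Core ℝ (X →₀ ℝ) :=
  { inner := fun p q => stmtB K p q
    conj_inner_symm := fun p q => by
      simp only [starRingEnd_apply, star_trivial]
      exact stmtB_comm K hKsymm q p
    re_inner_nonneg := fun p => by
      simpa [stmtB_apply] using hKpsd p.support ⇑p
    add_left := fun p q r => by simp [map_add]
    smul_left := fun p q r => by simp [map_smul] }
  letI : SeminormedAddCommGroup (X →₀ ℝ) :=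
    InnerProductSpace.Core.toSeminormedAddCommGroup (𝕜 := ℝ) (F := X →₀ ℝ) (c := core)
  letI : InnerProductSpace ℝ (X →₀ ℝ) :=
  { InnerProductSpace.Core.toNormedSpace (𝕜 := ℝ) (F := X →₀ ℝ) (c := core),
      core.toInner with
    norm_sq_eq_re_inner := fun w => by
      show Real.sqrt ((RCLike.re : ℝ →+ ℝ) (stmtB K w w)) ^ 2 = (RCLike.re : ℝ →+ ℝ) (stmtB K w w)
      exact Real.sq_sqrt (core.re_inner_nonneg w)
    conj_inner_symm := core.conj_inner_symm
    add_left := core.add_left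
    smul_left := core.smul_left }
  have hnorm : ∀ x y : X,
      ‖(↑(Finsupp.single x 1 : X →₀ ℝ) : UniformSpace.Completion (X →₀ ℝ))
        - ↑(Finsupp.single y 1 : X →₀ ℝ)‖ ^ 2 = K x x + K y y - 2 * K x y := by
    intro x y
    rw [← UniformSpace.Completion.coe_sub, UniformSpace.Completion.norm_coe,
      ← real_inner_self_eq_norm_sq]
    show stmtB K (Finsupp.single x 1 - Finsupp.single y 1)
      (Finsupp.single x 1 - Finsupp.single y 1) = _
    simp only [map_sub, LinearMap.sub_apply, stmtB_single_single]
    rw [hKsymm y x]; ring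
  refine ⟨UniformSpace.Completion (X →₀ ℝ), inferInstance, inferInstance, inferInstance,
    fun x => ↑(Finsupp.single x 1 : X →₀ ℝ), ?_, ?_, ?_⟩
  · intro x y hd
    nlinarith [hnorm x y, (hcond x y).1 hd, hτ0,
      norm_nonneg ((↑(Finsupp.single x 1 : X →₀ ℝ) : UniformSpace.Completion (X →₀ ℝ))
        - ↑(Finsupp.single y 1 : X →₀ ℝ))]
  · intro x y hd
    nlinarith [hnorm x y, (hcond x y).2.1 hd, hτ0, hτ1,
      norm_nonneg ((↑(Finsupp.single x 1 : X →₀ ℝ) : UniformSpace.Completion (X →₀ ℝ))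
        - ↑(Finsupp.single y 1 : X →₀ ℝ))]
  · intro x y
    nlinarith [hnorm x y, (hcond x y).2.2, hτ0, hτ1, hτ2,
      norm_nonneg ((↑(Finsupp.single x 1 : X →₀ ℝ) : UniformSpace.Completion (X →₀ ℝ))
        - ↑(Finsupp.single y 1 : X →₀ ℝ))]
end
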